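/- arXiv:1711.08082 — 9 statements merged into one kernel-verified Lean document; each statement's English description precedes it below -/
import Mathlib

section
/- For every positive integer n and every real x ≥ 0, the probability that the sum of squares of the coordinates of z exceeds n + 2√(n·x) + 2x is at most exp(−x); that is, P(∑_{i=1}^n z_i² ≥ n + 2√(n x) + 2x) ≤ exp(−x). -/
open MeasureTheory ProbabilityTheory

/-- The law of a random vector of `n` i.i.d. standard real Gaussians. -/
noncomputable def stdGaussianPi (n : ℕ) : Measure (Fin n → ℝ) :=
  Measure.pi fun _ => gaussianReal 0 1

lemma aux_two_log_le {u : ℝ} (hu : 1 ≤ u) : 2 * Real.log u ≤ u - u⁻¹ := by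
  have hmono : MonotoneOn (fun w : ℝ => w - w⁻¹ - 2 * Real.log w) (Set.Ici 1) := by
    have hsub : Set.Ici (1:ℝ) ⊆ {(0:ℝ)}ᶜ := by
      intro v hv
      simp only [Set.mem_compl_iff, Set.mem_singleton_iff]
      intro h; rw [h] at hv; simp at hv; linarith [hv]
    have hderiv : ∀ v ∈ interior (Set.Ici (1:ℝ)),
        HasDerivAt (fun w : ℝ => w - w⁻¹ - 2 * Real.log w) (1 - (-(v^2)⁻¹) - 2 * v⁻¹) v := by
      intro v hv
      rw [interior_Ici] at hv
      have hv0 : v ≠ 0 := by simp only [Set.mem_Ioi] at hv; linarith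
      exact ((hasDerivAt_id v).sub (hasDerivAt_inv hv0)).sub
        ((Real.hasDerivAt_log hv0).const_mul 2)
    apply monotoneOn_of_deriv_nonneg (convex_Ici 1)
    · exact ((continuousOn_id.sub (continuousOn_inv₀.mono hsub)).sub
        ((Real.continuousOn_log.mono hsub).const_smul 2)).congr (fun v _ => by simp [smul_eq_mul])
    · intro v hv
      exact ((hderiv v hv).differentiableAt).differentiableWithinAt
    · intro v hv
      rw [(hderiv v hv).deriv]
      rw [interior_Ici] at hv
      have hv0 : (0:ℝ) < v := by simp only [Set.mem_Ioi] at hv; linarith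
      have h1 := sq_nonneg (1 - v⁻¹)
      have h2 : (v^2)⁻¹ = v⁻¹ * v⁻¹ := by rw [sq, mul_inv]
      nlinarith [h1]
  have h := hmono (Set.mem_Ici.mpr le_rfl) (Set.mem_Ici.mpr hu) hu
  simp only [inv_one, Real.log_one] at h
  linarith

lemma aux_key_log {s : ℝ} (hs : 0 ≤ s) :
    (1 + 2*s) * Real.log (1 + 2*s) ≤ 2*s*(1+s) := by
  set u := Real.sqrt (1 + 2*s) with hu_def
  have hy0 : (0:ℝ) ≤ 1 + 2*s := by linarith
  have hu2 : u ^ 2 = 1 + 2*s := Real.sq_sqrt hy0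
  have hu1 : 1 ≤ u := by
    rw [show (1:ℝ) = Real.sqrt 1 by simp]
    exact Real.sqrt_le_sqrt (by linarith)
  have hu0 : 0 < u := by linarith
  have hlog : Real.log (1 + 2*s) = 2 * Real.log u := by
    rw [← hu2, Real.log_pow]; norm_num
  have h2 := aux_two_log_le hu1
  have hus : u ≤ 1 + s := by
    rw [hu_def, show (1:ℝ) + s = Real.sqrt ((1+s)^2) by rw [Real.sqrt_sq (by linarith)]]
    exact Real.sqrt_le_sqrt (by nlinarith)
  have h3 : (1 + 2*s) * (u - u⁻¹) = 2*s*u := by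
    field_simp
    linear_combination hu2
  calc (1 + 2*s) * Real.log (1 + 2*s) = (1 + 2*s) * (2 * Real.log u) := by rw [hlog]
    _ ≤ (1 + 2*s) * (u - u⁻¹) := by
        apply mul_le_mul_of_nonneg_left h2 hy0
    _ = 2*s*u := h3
    _ ≤ 2*s*(1+s) := by
        apply mul_le_mul_of_nonneg_left hus (by linarith)

lemma aux_integrable_gauss {t : ℝ} (ht : t < 1/2) :
    Integrable (fun x => Real.exp (t * x ^ 2)) (gaussianReal 0 1) := by
  rw [gaussianReal_of_var_ne_zero 0 one_ne_zero]
  have hmeas : Measurable fun x : ℝ => (gaussianPDFReal 0 1 x).toNNReal :=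
    (measurable_gaussianPDFReal 0 1).real_toNNReal
  have heq : gaussianPDF 0 1 = fun x => ((gaussianPDFReal 0 1 x).toNNReal : ENNReal) := rfl
  rw [heq, integrable_withDensity_iff_integrable_smul hmeas]
  have hfun : ∀ x : ℝ, ((gaussianPDFReal 0 1 x).toNNReal : ℝ) * Real.exp (t * x ^ 2)
      = (Real.sqrt (2 * Real.pi))⁻¹ * Real.exp (-(1/2 - t) * x ^ 2) := by
    intro x
    rw [Real.coe_toNNReal _ (gaussianPDFReal_nonneg 0 1 x)]
    simp only [gaussianPDFReal]
    rw [mul_assoc, ← Real.exp_add]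
    push_cast
    ring_nf
  simp only [NNReal.smul_def, smul_eq_mul, hfun]
  exact (integrable_exp_neg_mul_sq (by linarith)).const_mul _

lemma aux_integral_gauss {t : ℝ} (ht : t < 1/2) :
    ∫ x, Real.exp (t * x ^ 2) ∂(gaussianReal 0 1) = (Real.sqrt (1 - 2*t))⁻¹ := by
  rw [gaussianReal_of_var_ne_zero 0 one_ne_zero]
  have hmeas : Measurable fun x : ℝ => (gaussianPDFReal 0 1 x).toNNReal :=
    (measurable_gaussianPDFReal 0 1).real_toNNReal
  have heq : gaussianPDF 0 1 = fun x => ((gaussianPDFReal 0 1 x).toNNReal : ENNReal) := rfl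
  rw [heq, integral_withDensity_eq_integral_smul hmeas]
  have hfun : ∀ x : ℝ, ((gaussianPDFReal 0 1 x).toNNReal : ℝ) * Real.exp (t * x ^ 2)
      = (Real.sqrt (2 * Real.pi))⁻¹ * Real.exp (-(1/2 - t) * x ^ 2) := by
    intro x
    rw [Real.coe_toNNReal _ (gaussianPDFReal_nonneg 0 1 x)]
    simp only [gaussianPDFReal]
    rw [mul_assoc, ← Real.exp_add]
    push_cast
    ring_nf
  simp only [NNReal.smul_def, smul_eq_mul, hfun]
  rw [integral_const_mul, integral_gaussian]
  have hb : (0:ℝ) < 1/2 - t := by linarith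
  have hpi : (0:ℝ) < Real.pi := Real.pi_pos
  rw [← Real.sqrt_inv, ← Real.sqrt_mul (by positivity), ← Real.sqrt_inv]
  congr 1
  rw [eq_comm, inv_eq_iff_eq_inv, eq_comm]
  field_simp

lemma aux_integrable_pi (n : ℕ) {t : ℝ} (ht : t < 1/2) :
    Integrable (fun z : Fin n → ℝ => Real.exp (t * ∑ i, z i ^ 2)) (stdGaussianPi n) := by
  letI : MeasureSpace ℝ := ⟨gaussianReal 0 1⟩
  haveI : SigmaFinite (volume : Measure ℝ) := by
    show SigmaFinite (gaussianReal 0 1); infer_instance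
  have h1 : ∀ z : Fin n → ℝ, Real.exp (t * ∑ i, z i ^ 2) = ∏ i, Real.exp (t * z i ^ 2) := by
    intro z; rw [← Real.exp_sum, Finset.mul_sum]
  simp only [h1]
  have := MeasureTheory.Integrable.fintype_prod (𝕜 := ℝ) (ι := Fin n)
    (f := fun _ x => Real.exp (t * x ^ 2)) (fun _ => aux_integrable_gauss ht)
  exact this

lemma aux_integral_pi (n : ℕ) {t : ℝ} (ht : t < 1/2) :
    ∫ z : Fin n → ℝ, Real.exp (t * ∑ i, z i ^ 2) ∂(stdGaussianPi n)
      = ((Real.sqrt (1 - 2*t))⁻¹) ^ n := by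
  letI : MeasureSpace ℝ := ⟨gaussianReal 0 1⟩
  haveI : SigmaFinite (volume : Measure ℝ) := by
    show SigmaFinite (gaussianReal 0 1); infer_instance
  have h1 : ∀ z : Fin n → ℝ, Real.exp (t * ∑ i, z i ^ 2) = ∏ i, Real.exp (t * z i ^ 2) := by
    intro z; rw [← Real.exp_sum, Finset.mul_sum]
  simp only [h1]
  have h2 := MeasureTheory.integral_fintype_prod_volume_eq_pow (𝕜 := ℝ) (ι := Fin n)
    (fun x : ℝ => Real.exp (t * x ^ 2))
  have h3 : (∫ (x : ℝ), Real.exp (t * x ^ 2)) = (Real.sqrt (1 - 2*t))⁻¹ :=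
    aux_integral_gauss ht
  rw [show (stdGaussianPi n) = (volume : Measure (Fin n → ℝ)) from rfl]
  rw [h2, h3, Fintype.card_fin]

/-- Upper tail bound for the chi-squared distribution with `n` degrees of freedom
(Laurent–Massart): `P(χ²_n ≥ n + 2√(n x) + 2 x) ≤ exp (-x)`. -/
theorem chiSq_upper_tail (n : ℕ) (hn : 0 < n) (x : ℝ) (hx : 0 ≤ x) :
    stdGaussianPi n
        {z | (n : ℝ) + 2 * Real.sqrt (n * x) + 2 * x ≤ ∑ i, z i ^ 2}
      ≤ ENNReal.ofReal (Real.exp (-x)) := by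
  haveI : IsProbabilityMeasure (stdGaussianPi n) := by
    unfold stdGaussianPi; infer_instance
  set s : ℝ := Real.sqrt (x / n) with hs_def
  have hs : 0 ≤ s := Real.sqrt_nonneg _
  have h12 : (0:ℝ) < 1 + 2*s := by linarith
  set t : ℝ := s / (1 + 2*s) with ht_def
  have ht0 : 0 ≤ t := div_nonneg hs h12.le
  have ht : t < 1/2 := by
    rw [ht_def, div_lt_iff₀ h12]; linarith
  have hN : (0:ℝ) < n := Nat.cast_pos.mpr hn
  -- relations between s and x
  have hsx : s ^ 2 = x / n := Real.sq_sqrt (by positivity)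
  have hx_eq : x = n * s ^ 2 := by
    rw [hsx]; field_simp
  have hsqrt : Real.sqrt (n * x) = n * s := by
    rw [hx_eq, show (n:ℝ) * ((n:ℝ) * s^2) = ((n:ℝ)*s)^2 by ring, Real.sqrt_sq (by positivity)]
  set a : ℝ := (n : ℝ) + 2 * Real.sqrt (n * x) + 2 * x with ha_def
  -- Chernoff bound
  have hint := aux_integrable_pi n ht
  have hcher := measure_ge_le_exp_mul_mgf (μ := stdGaussianPi n)
    (X := fun z : Fin n → ℝ => ∑ i, z i ^ 2) a ht0 hint
  have hmgf : mgf (fun z : Fin n → ℝ => ∑ i, z i ^ 2) (stdGaussianPi n) t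
      = ((Real.sqrt (1 - 2*t))⁻¹) ^ n := by
    rw [mgf]; exact aux_integral_pi n ht
  rw [hmgf] at hcher
  -- rewrite the sqrt factor as an exponential
  have h1t : 1 - 2*t = (1 + 2*s)⁻¹ := by
    rw [ht_def]; field_simp; ring
  have hfac : ((Real.sqrt (1 - 2*t))⁻¹) ^ n = Real.exp ((n:ℝ) * (Real.log (1 + 2*s) / 2)) := by
    rw [h1t, Real.sqrt_inv, inv_inv, Real.exp_nat_mul, ← Real.log_sqrt h12.le,
      Real.exp_log (Real.sqrt_pos.mpr h12)]
  rw [hfac, ← Real.exp_add] at hcher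
  -- exponent inequality
  have hexp : -t * a + (n:ℝ) * (Real.log (1 + 2*s) / 2) ≤ -x := by
    have hkey := aux_key_log hs
    have ha : a = (n:ℝ) * (1 + 2*s + 2*s^2) := by
      rw [ha_def, hsqrt, hx_eq]; ring
    rw [ha, hx_eq, ht_def]
    have hgoal : (n:ℝ) * (Real.log (1+2*s) / 2) + (n:ℝ)*s^2
        ≤ s * ((n:ℝ) * (1 + 2*s + 2*s^2)) / (1+2*s) := by
      rw [le_div_iff₀ h12]
      nlinarith [mul_le_mul_of_nonneg_left hkey (le_of_lt (half_pos hN))]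
    have hre : -(s / (1 + 2*s)) * ((n:ℝ) * (1 + 2*s + 2*s^2))
        = -(s * ((n:ℝ) * (1 + 2*s + 2*s^2)) / (1+2*s)) := by ring
    rw [hre]
    linarith
  have hle : Real.exp (-t * a + (n:ℝ) * (Real.log (1 + 2*s) / 2)) ≤ Real.exp (-x) :=
    Real.exp_le_exp.mpr hexp
  rw [ENNReal.le_ofReal_iff_toReal_le (measure_ne_top _ _) (Real.exp_nonneg _)]
  exact hcher.trans hle
end

section
/- For every positive integer n and every real x ≥ 0, P(∑_{i=1}^n z_i² ≤ n − 2√(n x)) ≤ exp(−x). -/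
open MeasureTheory ProbabilityTheory
open scoped ENNReal NNReal

lemma exp_quad_le {u : ℝ} (hu : 0 ≤ u) : Real.exp (u - u ^ 2 / 2) ≤ 1 + u := by
  have key : ∀ v : ℝ, HasDerivAt (fun w => (1 + w) * Real.exp (w ^ 2 / 2 - w))
      (v ^ 2 * Real.exp (v ^ 2 / 2 - v)) v := by
    intro v
    have h1 : HasDerivAt (fun w : ℝ => w ^ 2 / 2 - w) (v - 1) v := by
      have := ((hasDerivAt_pow 2 v).div_const 2).sub (hasDerivAt_id' v)
      exact this.congr_deriv (by norm_num)
    have h3 : HasDerivAt (fun w : ℝ => 1 + w) 1 v := by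
      simpa using (hasDerivAt_id v).const_add (1 : ℝ)
    have := h3.mul h1.exp
    refine this.congr_deriv ?_
    ring
  have mono : MonotoneOn (fun w => (1 + w) * Real.exp (w ^ 2 / 2 - w)) (Set.Ici 0) := by
    refine monotoneOn_of_deriv_nonneg (convex_Ici 0) ?_ ?_ ?_
    · fun_prop
    · exact fun v _ => (key v).differentiableAt.differentiableWithinAt
    · intro v hv
      rw [(key v).deriv]
      positivity
  have h1 : (1:ℝ) ≤ (1 + u) * Real.exp (u ^ 2 / 2 - u) := by
    have := mono Set.self_mem_Ici hu hu
    simpa using this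
  have h2 : Real.exp (u - u ^ 2 / 2) = 1 / Real.exp (u ^ 2 / 2 - u) := by
    rw [one_div, ← Real.exp_neg]; ring_nf
  rw [h2, div_le_iff₀ (Real.exp_pos _)]
  linarith

lemma gauss_sq_int {s : ℝ} (hs : 0 ≤ s) :
    ∫ y, Real.exp (-(s * y ^ 2)) ∂(gaussianReal 0 1) = (Real.sqrt (1 + 2 * s))⁻¹ := by
  have hmeas : Measurable fun y : ℝ => (gaussianPDFReal 0 1 y).toNNReal :=
    (measurable_gaussianPDFReal 0 1).real_toNNReal
  rw [gaussianReal_of_var_ne_zero 0 one_ne_zero]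
  have hd : gaussianPDF 0 1 = fun y => ((gaussianPDFReal 0 1 y).toNNReal : ℝ≥0∞) := rfl
  rw [hd, integral_withDensity_eq_integral_smul hmeas]
  have heq : (fun y : ℝ => (gaussianPDFReal 0 1 y).toNNReal • Real.exp (-(s * y ^ 2)))
      = fun y : ℝ => (Real.sqrt (2 * Real.pi))⁻¹ * Real.exp (-(s + 2⁻¹) * y ^ 2) := by
    funext y
    rw [NNReal.smul_def, smul_eq_mul, Real.coe_toNNReal _ (gaussianPDFReal_nonneg 0 1 y)]
    simp only [gaussianPDFReal, NNReal.coe_one, mul_one, sub_zero]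
    rw [mul_assoc, ← Real.exp_add]
    ring_nf
  rw [heq, integral_const_mul, integral_gaussian]
  rw [← Real.sqrt_inv, ← Real.sqrt_mul (by positivity)]
  have h2 : (2 * Real.pi)⁻¹ * (Real.pi / (s + 2⁻¹)) = (1 + 2 * s)⁻¹ := by
    have : Real.pi ≠ 0 := Real.pi_ne_zero
    field_simp
    ring
  rw [h2, Real.sqrt_inv]

instance (n : ℕ) : IsProbabilityMeasure (stdGaussianPi n) := by
  unfold stdGaussianPi; infer_instance

lemma map_eval (n : ℕ) (i : Fin n) :
    (stdGaussianPi n).map (fun z : Fin n → ℝ => z i) = gaussianReal 0 1 := by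
  refine Measure.ext fun s hs => ?_
  rw [Measure.map_apply (measurable_pi_apply i) hs]
  have hpre : (fun z : Fin n → ℝ => z i) ⁻¹' s
      = Set.pi Set.univ (Function.update (fun _ : Fin n => (Set.univ : Set ℝ)) i s) := by
    ext z
    simp only [Set.mem_preimage, Set.mem_univ_pi]
    constructor
    · intro h j
      rcases eq_or_ne j i with rfl | hj
      · simpa using h
      · simp [Function.update_of_ne hj]
    · intro h
      simpa using h i
  rw [stdGaussianPi, hpre, Measure.pi_pi]
  rw [Finset.prod_eq_single i (fun j _ hj => by simp [Function.update_of_ne hj])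
    (fun h => absurd (Finset.mem_univ i) h)]
  simp

lemma indep_eval (n : ℕ) :
    iIndepFun (fun (i : Fin n) (z : Fin n → ℝ) => z i)
      (stdGaussianPi n) := by
  rw [iIndepFun_iff_measure_inter_preimage_eq_mul]
  intro S sets hS
  classical
  have hpre : (⋂ i ∈ S, (fun z : Fin n → ℝ => z i) ⁻¹' sets i)
      = Set.pi Set.univ (fun i => if i ∈ S then sets i else Set.univ) := by
    ext z
    simp only [Set.mem_iInter, Set.mem_preimage, Set.mem_univ_pi]
    constructor
    · intro h j
      by_cases hj : j ∈ S
      · simp [hj, h j hj]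
      · simp [hj]
    · intro h j hj
      have := h j
      simpa [hj] using this
  have hcoord : ∀ i ∈ S, stdGaussianPi n ((fun z : Fin n → ℝ => z i) ⁻¹' sets i)
      = gaussianReal 0 1 (sets i) := by
    intro i hi
    rw [← map_eval n i, Measure.map_apply (measurable_pi_apply i) (hS i hi)]
  rw [hpre]
  calc (stdGaussianPi n) (Set.univ.pi fun i => if i ∈ S then sets i else Set.univ)
      = ∏ j, (gaussianReal 0 1) (if j ∈ S then sets j else Set.univ) := by
        rw [stdGaussianPi, Measure.pi_pi]
    _ = ∏ j ∈ S, (gaussianReal 0 1) (if j ∈ S then sets j else Set.univ) :=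
        (Finset.prod_subset (Finset.subset_univ S) (fun j _ hj => by simp [hj])).symm
    _ = ∏ j ∈ S, stdGaussianPi n ((fun z : Fin n → ℝ => z j) ⁻¹' sets j) :=
        Finset.prod_congr rfl fun j hj => by rw [if_pos hj, hcoord j hj]


/-- Lower tail bound for the chi-squared distribution with `n` degrees of freedom
(Laurent–Massart): `P(χ²_n ≤ n - 2√(n x)) ≤ exp (-x)`. -/
theorem chiSq_lower_tail (n : ℕ) (hn : 0 < n) (x : ℝ) (hx : 0 ≤ x) :
    stdGaussianPi n
        {z | ∑ i, z i ^ 2 ≤ (n : ℝ) - 2 * Real.sqrt (n * x)}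
      ≤ ENNReal.ofReal (Real.exp (-x)) := by
  have hn' : (0:ℝ) < n := by exact_mod_cast hn
  set s : ℝ := Real.sqrt (x / n) with hs_def
  have hs : 0 ≤ s := Real.sqrt_nonneg _
  have hs2 : s ^ 2 = x / n := Real.sq_sqrt (div_nonneg hx hn'.le)
  set ε : ℝ := (n : ℝ) - 2 * Real.sqrt (n * x) with hε_def
  set μ := stdGaussianPi n with hμ_def
  set X : Fin n → (Fin n → ℝ) → ℝ := fun i z => z i ^ 2 with hX
  have hXmeas : ∀ i, Measurable (X i) := fun i => (measurable_pi_apply i).pow_const 2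
  have hSmeas : Measurable (∑ i, X i) := by
    have h : (∑ i, X i) = fun z => ∑ i, X i z := by
      funext z; simp [Finset.sum_apply]
    rw [h]
    exact Finset.measurable_sum _ fun i _ => hXmeas i
  -- mgf of each coordinate squared
  have hmgf_i : ∀ i, mgf (X i) μ (-s) = (Real.sqrt (1 + 2 * s))⁻¹ := by
    intro i
    have hcont : Continuous fun y : ℝ => Real.exp (-(s * y ^ 2)) := by fun_prop
    calc mgf (X i) μ (-s)
        = ∫ y, Real.exp (-(s * y ^ 2)) ∂(μ.map (fun z : Fin n → ℝ => z i)) := by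
          rw [mgf, integral_map (measurable_pi_apply i).aemeasurable
            hcont.aestronglyMeasurable]
          congr 1
          funext z
          simp only [hX, neg_mul]
      _ = (Real.sqrt (1 + 2 * s))⁻¹ := by
          rw [hμ_def, map_eval n i]
          exact gauss_sq_int hs
  -- independence of the squared coordinates
  have hindep : iIndepFun X μ := by
    have := (indep_eval n).comp (fun _ => fun y : ℝ => y ^ 2)
      (fun _ => measurable_id.pow_const 2)
    exact this
  -- integrability
  have h_int : Integrable (fun z => Real.exp (-s * (∑ i, X i) z)) μ := by
    refine Integrable.mono' (integrable_const 1)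
      ((hSmeas.const_mul (-s)).exp.aestronglyMeasurable) ?_
    filter_upwards with z
    rw [Real.norm_eq_abs, abs_of_pos (Real.exp_pos _), Real.exp_le_one_iff]
    have hsum : 0 ≤ (∑ i, X i) z := by
      rw [Finset.sum_apply]
      exact Finset.sum_nonneg fun i _ => sq_nonneg _
    exact mul_nonpos_of_nonpos_of_nonneg (neg_nonpos.mpr hs) hsum
  -- Chernoff bound
  have chernoff := measure_le_le_exp_mul_mgf (X := ∑ i, X i) (μ := μ) ε
    (neg_nonpos.mpr hs) h_int
  have hmgf_sum : mgf (∑ i, X i) μ (-s) = ((Real.sqrt (1 + 2 * s))⁻¹) ^ n := by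
    rw [hindep.mgf_sum hXmeas]
    simp [hmgf_i]
  -- numeric estimate
  have hnx : Real.sqrt ((n : ℝ) * x) = n * s := by
    have h1 : (n : ℝ) * x = (n : ℝ) ^ 2 * (x / n) := by field_simp
    rw [h1, Real.sqrt_mul (sq_nonneg _), Real.sqrt_sq hn'.le]
  have hc : 0 < Real.sqrt (1 + 2 * s) := Real.sqrt_pos.mpr (by linarith)
  have hexp : Real.exp (s - s ^ 2) ≤ Real.sqrt (1 + 2 * s) := by
    have h1 : Real.exp (s - s ^ 2)
        = Real.sqrt (Real.exp (2 * s - (2 * s) ^ 2 / 2)) := by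
      rw [show 2 * s - (2 * s) ^ 2 / 2 = (s - s ^ 2) + (s - s ^ 2) by ring,
        Real.exp_add, Real.sqrt_mul_self (Real.exp_nonneg _)]
    rw [h1]
    exact Real.sqrt_le_sqrt (exp_quad_le (by positivity))
  have hnum : Real.exp (-(-s) * ε) * ((Real.sqrt (1 + 2 * s))⁻¹) ^ n
      ≤ Real.exp (-x) := by
    rw [neg_neg, inv_pow]
    rw [mul_inv_le_iff₀ (pow_pos hc n)]
    have hse : s * ε + x = (n : ℝ) * (s - s ^ 2) := by
      have hxn : x = (n : ℝ) * s ^ 2 := by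
        rw [hs2]; field_simp
      rw [hε_def, hnx]
      nlinarith [hxn]
    have h2 : Real.exp (s * ε) = Real.exp (-x) * Real.exp ((n:ℝ) * (s - s ^ 2)) := by
      rw [← Real.exp_add, ← hse]; ring_nf
    rw [h2]
    have h3 : Real.exp ((n:ℝ) * (s - s ^ 2)) ≤ Real.sqrt (1 + 2 * s) ^ n := by
      rw [Real.exp_nat_mul]
      exact pow_le_pow_left₀ (Real.exp_nonneg _) hexp n
    have := mul_le_mul_of_nonneg_left h3 (Real.exp_nonneg (-x))
    linarith
  -- put it together
  have hset : {z : Fin n → ℝ | ∑ i, z i ^ 2 ≤ (n : ℝ) - 2 * Real.sqrt (n * x)}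
      = {z | (∑ i, X i) z ≤ ε} := by
    ext z
    simp [hX, Finset.sum_apply, hε_def]
  rw [hset]
  show μ {z | (∑ i, X i) z ≤ ε} ≤ ENNReal.ofReal (Real.exp (-x))
  rw [← ENNReal.ofReal_toReal (measure_ne_top μ {z | (∑ i, X i) z ≤ ε})]
  exact ENNReal.ofReal_le_ofReal
    (le_trans chernoff (by rw [hmgf_sum]; exact hnum))
end

section
/- For every positive integer n and every real t ≥ n, P(∑_{i=1}^n z_i² ≥ t) ≤ exp(−(√(2t − n) − √n)² / 4). -/
open MeasureTheory ProbabilityTheory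
open scoped NNReal ENNReal

-- key scalar lemma
lemma key_log_le (u : ℝ) (hu : 1 ≤ u) : Real.log u + 1 ≤ Real.sqrt (2*u - 1) := by
  set v := Real.sqrt (2*u - 1) with hv
  have h2u : (0:ℝ) ≤ 2*u - 1 := by linarith
  have hv2 : v^2 = 2*u - 1 := Real.sq_sqrt h2u
  have hv1 : 1 ≤ v := by
    nlinarith [Real.sq_sqrt h2u, Real.sqrt_nonneg (2*u - 1)]
  have hupos : (0:ℝ) < u := by linarith
  have hlog : Real.log u ≤ v - 1 := by
    rw [Real.log_le_iff_le_exp hupos]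
    have := Real.quadratic_le_exp_of_nonneg (x := v - 1) (by linarith)
    nlinarith [this]
  linarith

lemma chi_real_ineq (n : ℕ) (hn : 0 < n) (t : ℝ) (ht : (n:ℝ) ≤ t) :
    Real.exp (-((1 - n/t)/2 * t)) * Real.sqrt (t/n) ^ n
      ≤ Real.exp (-((Real.sqrt (2*t - n) - Real.sqrt n)^2/4)) := by
  have hnpos : (0:ℝ) < n := Nat.cast_pos.mpr hn
  have htpos : (0:ℝ) < t := lt_of_lt_of_le hnpos ht
  have hupos : (0:ℝ) < t/n := div_pos htpos hnpos
  have hsq : Real.sqrt (t/n) ^ n = Real.exp (n * (Real.log (t/n) / 2)) := by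
    rw [Real.exp_nat_mul, ← Real.log_sqrt hupos.le, Real.exp_log (Real.sqrt_pos.mpr hupos)]
  rw [hsq, ← Real.exp_add, Real.exp_le_exp]
  -- expand the square
  have h2tn : (0:ℝ) ≤ 2*t - n := by linarith
  have ha2 : Real.sqrt (2*t - n) ^ 2 = 2*t - n := Real.sq_sqrt h2tn
  have hb2 : Real.sqrt (n:ℝ) ^ 2 = n := Real.sq_sqrt hnpos.le
  have hab : Real.sqrt (2*t - n) * Real.sqrt (n:ℝ) = n * Real.sqrt (2*(t/n) - 1) := by
    rw [← Real.sqrt_mul h2tn]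
    conv_rhs => rw [show (n:ℝ) = Real.sqrt ((n:ℝ)^2) by rw [Real.sqrt_sq hnpos.le]]
    rw [← Real.sqrt_mul (by positivity)]
    congr 1
    field_simp
    rw [Real.sqrt_sq hnpos.le]
    ring
  have hkey := key_log_le (t/n) ((one_le_div hnpos).mpr ht)
  have hst : (1 - n/t)/2 * t = (t - n)/2 := by field_simp
  rw [hst]
  nlinarith [hkey, hnpos, sq_nonneg (Real.sqrt (2*t-n) - Real.sqrt n)]

lemma gaussian_pdf_toReal (x : ℝ) :
    (gaussianPDF 0 1 x).toReal = gaussianPDFReal 0 1 x :=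
  ENNReal.toReal_ofReal (gaussianPDFReal_nonneg 0 1 x)

lemma pdf_mul_exp (s x : ℝ) :
    Real.exp (s * x^2) * gaussianPDFReal 0 1 x
      = (Real.sqrt (2 * Real.pi))⁻¹ * Real.exp (-(1/2 - s) * x^2) := by
  simp only [gaussianPDFReal, NNReal.coe_one, mul_one, sub_zero]
  rw [mul_left_comm, ← Real.exp_add]
  congr 1
  exact congrArg Real.exp (by ring)

lemma gaussian_sq_exp_integrable {s : ℝ} (hs : s < 1/2) :
    Integrable (fun x => Real.exp (s * x^2)) (gaussianReal 0 1) := by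
  rw [gaussianReal_of_var_ne_zero 0 one_ne_zero]
  rw [integrable_withDensity_iff (measurable_gaussianPDF 0 1)
    (Filter.Eventually.of_forall fun x => ENNReal.ofReal_lt_top)]
  have : (fun x => Real.exp (s * x^2) * (gaussianPDF 0 1 x).toReal)
      = fun x => (Real.sqrt (2 * Real.pi))⁻¹ * Real.exp (-(1/2 - s) * x^2) := by
    funext x; rw [gaussian_pdf_toReal, pdf_mul_exp]
  rw [this]
  exact (integrable_exp_neg_mul_sq (by linarith)).const_mul _

lemma gaussian_sq_exp_integral {s : ℝ} (hs : s < 1/2) :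
    ∫ x, Real.exp (s * x^2) ∂(gaussianReal 0 1) = Real.sqrt (1/(1 - 2*s)) := by
  rw [gaussianReal_of_var_ne_zero 0 one_ne_zero]
  have hd : gaussianPDF 0 1 = fun x => ((Real.toNNReal (gaussianPDFReal 0 1 x) : ℝ≥0) : ℝ≥0∞) :=
    rfl
  rw [hd, integral_withDensity_eq_integral_smul
    (by exact (measurable_gaussianPDFReal 0 1).real_toNNReal) _]
  have : (fun x => Real.toNNReal (gaussianPDFReal 0 1 x) • Real.exp (s * x^2))
      = fun x => (Real.sqrt (2 * Real.pi))⁻¹ * Real.exp (-(1/2 - s) * x^2) := by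
    funext x
    rw [NNReal.smul_def, smul_eq_mul, Real.coe_toNNReal _ (gaussianPDFReal_nonneg 0 1 x),
      mul_comm, pdf_mul_exp]
  rw [this, integral_const_mul, integral_gaussian]
  rw [← Real.sqrt_inv, ← Real.sqrt_mul (by positivity)]
  congr 1
  have hπ : Real.pi ≠ 0 := Real.pi_ne_zero
  have hs2 : 1/2 - s ≠ 0 := by linarith
  have hs3 : (1:ℝ) - 2*s ≠ 0 := by linarith
  rw [eq_div_iff hs3]
  field_simp

/-- Upper tail bound for the chi-squared distribution with `n` degrees of freedom:
for `t ≥ n`, `P(χ²_n ≥ t) ≤ exp (-(√(2t - n) - √n)² / 4)`. -/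
theorem chiSq_upper_tail' (n : ℕ) (hn : 0 < n) (t : ℝ) (ht : (n : ℝ) ≤ t) :
    stdGaussianPi n {z | t ≤ ∑ i, z i ^ 2}
      ≤ ENNReal.ofReal
          (Real.exp (-((Real.sqrt (2 * t - n) - Real.sqrt n) ^ 2 / 4))) := by
  have hnpos : (0:ℝ) < n := Nat.cast_pos.mpr hn
  have htpos : (0:ℝ) < t := lt_of_lt_of_le hnpos ht
  set s : ℝ := (1 - n/t)/2 with hs_def
  have hs0 : 0 ≤ s := by
    have h1 : (n:ℝ)/t ≤ 1 := (div_le_one htpos).mpr ht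
    rw [hs_def]; linarith
  have hs_lt : s < 1/2 := by
    have h1 : 0 < (n:ℝ)/t := div_pos hnpos htpos
    rw [hs_def]; linarith
  have h2s : 1 - 2*s = (n:ℝ)/t := by rw [hs_def]; ring
  have hmeas : Measurable fun z : Fin n → ℝ => ∑ i, z i ^ 2 :=
    Finset.measurable_sum _ fun i _ => (measurable_pi_apply i).pow_const 2
  have hmeasE : Measurable fun z : Fin n → ℝ =>
      ENNReal.ofReal (Real.exp (s * ((∑ i, z i ^ 2) - t))) :=
    (((hmeas.sub measurable_const).const_mul s).exp).ennreal_ofReal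
  have hint1 : Integrable (fun x : ℝ => Real.exp (s * x^2)) (gaussianReal 0 1) :=
    gaussian_sq_exp_integrable hs_lt
  let instMS : ∀ _ : Fin n, MeasureSpace ℝ := fun _ => ⟨gaussianReal 0 1⟩
  have hprod_int : Integrable (fun z : Fin n → ℝ => ∏ i, Real.exp (s * (z i)^2))
      (stdGaussianPi n) :=
    MeasureTheory.Integrable.fin_nat_prod (E := fun _ => ℝ) (μ := fun _ => gaussianReal 0 1)
      (f := fun _ x => Real.exp (s * x^2)) (fun _ => hint1)
  have hprod_eq : ∫ z, (∏ i, Real.exp (s * (z i)^2)) ∂(stdGaussianPi n)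
      = (Real.sqrt (1/(1 - 2*s))) ^ n := by
    have h2 : ∫ z, (∏ i, Real.exp (s * (z i)^2)) ∂(stdGaussianPi n)
        = ∏ _i : Fin n, ∫ x, Real.exp (s*x^2) ∂(gaussianReal 0 1) :=
      MeasureTheory.integral_fin_nat_prod_eq_prod (E := fun _ => ℝ)
        (μ := fun _ => gaussianReal 0 1) (fun _ x => Real.exp (s * x^2))
    rw [h2, gaussian_sq_exp_integral hs_lt, Finset.prod_const, Finset.card_univ,
      Fintype.card_fin]
  have hfun : (fun z : Fin n → ℝ => Real.exp (s * ((∑ i, z i ^ 2) - t)))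
      = fun z => Real.exp (-(s*t)) * ∏ i, Real.exp (s * (z i)^2) := by
    funext z
    rw [← Real.exp_sum, ← Real.exp_add]
    congr 1
    rw [← Finset.mul_sum]
    ring
  have hint : Integrable (fun z : Fin n → ℝ => Real.exp (s * ((∑ i, z i ^ 2) - t)))
      (stdGaussianPi n) := by
    rw [hfun]; exact hprod_int.const_mul _
  calc stdGaussianPi n {z | t ≤ ∑ i, z i ^ 2}
      = ∫⁻ _z in {z | t ≤ ∑ i, z i ^ 2}, 1 ∂(stdGaussianPi n) := (setLIntegral_one _).symm
    _ ≤ ∫⁻ z in {z | t ≤ ∑ i, z i ^ 2},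
          ENNReal.ofReal (Real.exp (s * ((∑ i, z i ^ 2) - t))) ∂(stdGaussianPi n) := by
        refine setLIntegral_mono hmeasE fun z hz => ?_
        rw [show (1:ℝ≥0∞) = ENNReal.ofReal 1 by simp]
        exact ENNReal.ofReal_le_ofReal
          (Real.one_le_exp (mul_nonneg hs0 (sub_nonneg.mpr hz)))
    _ ≤ ∫⁻ z, ENNReal.ofReal (Real.exp (s * ((∑ i, z i ^ 2) - t))) ∂(stdGaussianPi n) :=
        setLIntegral_le_lintegral _ _
    _ = ENNReal.ofReal (∫ z, Real.exp (s * ((∑ i, z i ^ 2) - t)) ∂(stdGaussianPi n)) :=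
        (ofReal_integral_eq_lintegral_ofReal hint
          (Filter.Eventually.of_forall fun z => (Real.exp_pos _).le)).symm
    _ ≤ _ := by
        apply ENNReal.ofReal_le_ofReal
        rw [hfun, integral_const_mul, hprod_eq, h2s, one_div, inv_div, hs_def]
        exact chi_real_ineq n hn t ht
end

section
/- For every positive integer n, every vector a ∈ ℝⁿ with λ := ∑_{i=1}^n a_i², and every real x ≥ 0, P(∑_{i=1}^n (z_i + a_i)² ≥ (n + λ) + 2√((n + 2λ) x) + 2x) ≤ exp(−x). -/
open MeasureTheory ProbabilityTheory Real
open scoped ENNReal NNReal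

lemma gauss_integral_eq (g : ℝ → ℝ) :
    ∫ z, g z ∂(gaussianReal 0 1) = ∫ z, gaussianPDFReal 0 1 z * g z := by
  rw [gaussianReal_of_var_ne_zero _ one_ne_zero, gaussianPDF_def]
  rw [show (fun x => ENNReal.ofReal (gaussianPDFReal 0 1 x))
      = (fun x => ((gaussianPDFReal 0 1 x).toNNReal : ℝ≥0∞)) from rfl]
  rw [integral_withDensity_eq_integral_smul
    ((measurable_gaussianPDFReal 0 1).real_toNNReal) g]
  congr 1; ext z
  rw [NNReal.smul_def, smul_eq_mul, Real.coe_toNNReal _ (gaussianPDFReal_nonneg 0 1 z)]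

lemma gauss_integrable_iff (g : ℝ → ℝ) :
    Integrable g (gaussianReal 0 1) ↔ Integrable (fun z => gaussianPDFReal 0 1 z * g z) := by
  rw [gaussianReal_of_var_ne_zero _ one_ne_zero, gaussianPDF_def]
  rw [show (fun x => ENNReal.ofReal (gaussianPDFReal 0 1 x))
      = (fun x => ((gaussianPDFReal 0 1 x).toNNReal : ℝ≥0∞)) from rfl]
  rw [integrable_withDensity_iff_integrable_smul
    ((measurable_gaussianPDFReal 0 1).real_toNNReal)]
  constructor <;> intro h <;> refine h.congr (Filter.Eventually.of_forall fun z => ?_) <;>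
    simp [NNReal.smul_def, Real.coe_toNNReal _ (gaussianPDFReal_nonneg 0 1 z)]

lemma gauss_pdf_mul_exp (a t : ℝ) (ht : t < 1/2) (z : ℝ) :
    gaussianPDFReal 0 1 z * rexp (t * (z + a)^2)
      = (Real.sqrt (2 * π))⁻¹ * rexp (t * a^2 / (1 - 2*t))
          * rexp (-((1 - 2*t)/2) * (z - 2*t*a/(1 - 2*t))^2) := by
  have h1 : (0:ℝ) < 1 - 2*t := by linarith
  unfold gaussianPDFReal
  simp only [NNReal.coe_one, mul_one, sub_zero]
  rw [mul_assoc, ← Real.exp_add, mul_assoc, ← Real.exp_add]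
  congr 2
  field_simp
  ring

lemma gauss_mgf_one_dim (a t : ℝ) (ht : t < 1/2) :
    Integrable (fun z => rexp (t * (z + a)^2)) (gaussianReal 0 1) ∧
    ∫ z, rexp (t * (z + a)^2) ∂(gaussianReal 0 1)
      = (Real.sqrt (1 - 2*t))⁻¹ * rexp (t * a^2 / (1 - 2*t)) := by
  have h1 : (0:ℝ) < 1 - 2*t := by linarith
  have hb : (0:ℝ) < (1 - 2*t)/2 := by linarith
  constructor
  · rw [gauss_integrable_iff]
    refine Integrable.congr ?_
      (Filter.Eventually.of_forall fun z => (gauss_pdf_mul_exp a t ht z).symm)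
    exact ((integrable_exp_neg_mul_sq hb).comp_sub_right (2*t*a/(1 - 2*t))).const_mul _
  · rw [gauss_integral_eq]
    rw [integral_congr_ae (Filter.Eventually.of_forall fun z => gauss_pdf_mul_exp a t ht z)]
    rw [integral_const_mul]
    rw [integral_sub_right_eq_self (μ := volume)
      (fun u => rexp (-((1 - 2*t)/2) * u^2)) (2*t*a/(1 - 2*t))]
    rw [integral_gaussian]
    have key : (Real.sqrt (2 * π))⁻¹ * Real.sqrt (π / ((1 - 2*t)/2)) = (Real.sqrt (1 - 2*t))⁻¹ := by
      rw [← Real.sqrt_inv, ← Real.sqrt_mul (by positivity), ← Real.sqrt_inv]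
      congr 1
      have hpi := Real.pi_pos
      field_simp
    rw [mul_right_comm, key]

lemma gauss_mgf_pi (n : ℕ) (a : Fin n → ℝ) (t : ℝ) (ht : t < 1/2) :
    Integrable (fun z : Fin n → ℝ => rexp (t * ∑ i, (z i + a i)^2)) (stdGaussianPi n) ∧
    ∫ z, rexp (t * ∑ i, (z i + a i)^2) ∂(stdGaussianPi n)
      = ((Real.sqrt (1 - 2*t))⁻¹)^n * rexp (t * (∑ i, a i^2) / (1 - 2*t)) := by
  letI : MeasureSpace ℝ := ⟨gaussianReal 0 1⟩
  haveI : SigmaFinite (volume : Measure ℝ) :=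
    (inferInstance : SigmaFinite (gaussianReal 0 1))
  have hvol : stdGaussianPi n = (volume : Measure (Fin n → ℝ)) := rfl
  have hfun : (fun z : Fin n → ℝ => rexp (t * ∑ i, (z i + a i)^2))
      = fun z => ∏ i, rexp (t * (z i + a i)^2) := by
    ext z
    rw [← Real.exp_sum, Finset.mul_sum]
  constructor
  · rw [hvol, hfun]
    exact Integrable.fintype_prod (f := fun i y => rexp (t * (y + a i)^2))
      (fun i => (gauss_mgf_one_dim (a i) t ht).1)
  · rw [hvol, hfun]
    rw [show (volume : Measure (Fin n → ℝ)) = Measure.pi fun _ => volume from rfl,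
      integral_fintype_prod_eq_prod (f := fun i y => rexp (t * (y + a i)^2))]
    have : ∀ i : Fin n, (∫ y, rexp (t * (y + a i)^2))
        = (Real.sqrt (1 - 2*t))⁻¹ * rexp (t * (a i)^2 / (1 - 2*t)) :=
      fun i => (gauss_mgf_one_dim (a i) t ht).2
    rw [Finset.prod_congr rfl fun i _ => this i, Finset.prod_mul_distrib,
      Finset.prod_const, Finset.card_univ, Fintype.card_fin, ← Real.exp_sum]
    congr 1
    rw [Finset.mul_sum, Finset.sum_div]

lemma inv_sqrt_one_sub_le (t : ℝ) (ht0 : 0 ≤ t) (ht : t < 1/2) :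
    (Real.sqrt (1 - 2*t))⁻¹ ≤ rexp (t + t^2/(1 - 2*t)) := by
  have h1 : (0:ℝ) < 1 - 2*t := by linarith
  have hu0 : 0 ≤ 2*t^2/(1 - 2*t) := by positivity
  have e1 : 1 + 2*t + 2*t^2 ≤ rexp (2*t) := by
    have := Real.quadratic_le_exp_of_nonneg (x := 2*t) (by linarith)
    nlinarith
  have e2 : 1 + 2*t^2/(1 - 2*t) ≤ rexp (2*t^2/(1 - 2*t)) := by
    have := Real.add_one_le_exp (2*t^2/(1 - 2*t))
    linarith
  have hu : (1 - 2*t) * (2*t^2/(1 - 2*t)) = 2*t^2 := by field_simp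
  have hsq : (1 - 2*t)⁻¹ ≤ rexp (2*t + 2*t^2/(1 - 2*t)) := by
    rw [Real.exp_add, inv_le_iff_one_le_mul₀ h1]
    calc (1:ℝ) ≤ (1 - 2*t) * ((1 + 2*t + 2*t^2) * (1 + 2*t^2/(1 - 2*t))) := by
          nlinarith [sq_nonneg t, sq_nonneg (t^2)]
      _ ≤ (1 - 2*t) * (rexp (2*t) * rexp (2*t^2/(1 - 2*t))) := by
          have h2 : (0:ℝ) ≤ 1 + 2*t + 2*t^2 := by nlinarith
          have := mul_le_mul e1 e2 (by linarith) (Real.exp_nonneg _)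
          exact mul_le_mul_of_nonneg_left this h1.le
      _ = rexp (2*t) * rexp (2*t^2/(1 - 2*t)) * (1 - 2*t) := by ring
  have hL : (Real.sqrt (1 - 2*t))⁻¹ = Real.sqrt ((1 - 2*t)⁻¹) := (Real.sqrt_inv _).symm
  have hR : Real.sqrt (rexp (2*t + 2*t^2/(1 - 2*t))) = rexp (t + t^2/(1 - 2*t)) := by
    rw [show 2*t + 2*t^2/(1 - 2*t) = (t + t^2/(1 - 2*t)) + (t + t^2/(1 - 2*t)) by ring,
      Real.exp_add, Real.sqrt_mul_self (Real.exp_nonneg _)]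
  rw [hL, ← hR]
  exact Real.sqrt_le_sqrt hsq

/-- Upper tail bound for the noncentral chi-squared distribution with `n` degrees of
freedom and noncentrality `λ = ∑ i, a i ^ 2` (Birgé):
`P(χ²_n(λ) ≥ (n + λ) + 2√((n + 2λ) x) + 2x) ≤ exp (-x)`. -/
theorem noncentral_chiSq_upper_tail (n : ℕ) (hn : 0 < n) (a : Fin n → ℝ)
    (lam : ℝ) (hlam : lam = ∑ i, a i ^ 2) (x : ℝ) (hx : 0 ≤ x) :
    stdGaussianPi n
        {z | ((n : ℝ) + lam) + 2 * Real.sqrt (((n : ℝ) + 2 * lam) * x) + 2 * x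
              ≤ ∑ i, (z i + a i) ^ 2}
      ≤ ENNReal.ofReal (Real.exp (-x)) := by
  have hlam0 : 0 ≤ lam := hlam ▸ Finset.sum_nonneg fun i _ => sq_nonneg _
  have hn1 : (1:ℝ) ≤ n := Nat.one_le_cast.mpr hn
  set v : ℝ := (n : ℝ) + 2*lam with hv
  have hv0 : 0 < v := by rw [hv]; linarith
  set w := Real.sqrt v with hwdef
  set s := Real.sqrt x with hsdef
  have hw : 0 < w := Real.sqrt_pos.mpr hv0
  have hs : 0 ≤ s := Real.sqrt_nonneg x
  have hd : 0 < w + 2*s := by linarith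
  set t := s/(w + 2*s) with htdef
  have ht0 : 0 ≤ t := by positivity
  have ht : t < 1/2 := by rw [htdef, div_lt_iff₀ hd]; linarith
  have h12 : 1 - 2*t = w/(w + 2*s) := by rw [htdef]; field_simp; ring
  have h120 : 0 < 1 - 2*t := by rw [h12]; positivity
  have hw2 : w^2 = v := Real.sq_sqrt hv0.le
  have hs2 : s^2 = x := Real.sq_sqrt hx
  have hvx : Real.sqrt (v * x) = w * s := by rw [Real.sqrt_mul hv0.le]
  set c : ℝ := ((n : ℝ) + lam) + 2*Real.sqrt (v*x) + 2*x with hc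
  haveI : IsProbabilityMeasure (stdGaussianPi n) := by unfold stdGaussianPi; infer_instance
  have hint := (gauss_mgf_pi n a t ht).1
  have hmarkov := measure_ge_le_exp_mul_mgf
    (X := fun z : Fin n → ℝ => ∑ i, (z i + a i)^2) (μ := stdGaussianPi n) c ht0 hint
  have hmgf : mgf (fun z : Fin n → ℝ => ∑ i, (z i + a i)^2) (stdGaussianPi n) t
      = ((Real.sqrt (1 - 2*t))⁻¹)^n * rexp (t*lam/(1 - 2*t)) := by
    rw [mgf, (gauss_mgf_pi n a t ht).2, ← hlam]
  rw [hmgf] at hmarkov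
  have hpow : ((Real.sqrt (1 - 2*t))⁻¹)^n ≤ rexp ((n:ℝ) * (t + t^2/(1 - 2*t))) := by
    calc ((Real.sqrt (1 - 2*t))⁻¹)^n ≤ (rexp (t + t^2/(1 - 2*t)))^n :=
          pow_le_pow_left₀ (by positivity) (inv_sqrt_one_sub_le t ht0 ht) n
      _ = rexp ((n:ℝ) * (t + t^2/(1 - 2*t))) := by
          rw [← Real.exp_nat_mul]
  have hexp_eq : -t*c + ((n:ℝ) * (t + t^2/(1 - 2*t)) + t*lam/(1 - 2*t)) = -x := by
    have hvv : (n:ℝ) = w^2 - 2*lam := by rw [hw2, hv]; ring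
    rw [hc, hvx, h12, htdef, ← hs2, hvv]
    field_simp
    ring
  have hkey : rexp (-t*c) * (((Real.sqrt (1 - 2*t))⁻¹)^n * rexp (t*lam/(1 - 2*t)))
      ≤ rexp (-x) := by
    calc rexp (-t*c) * (((Real.sqrt (1 - 2*t))⁻¹)^n * rexp (t*lam/(1 - 2*t)))
        ≤ rexp (-t*c) * (rexp ((n:ℝ) * (t + t^2/(1 - 2*t))) * rexp (t*lam/(1 - 2*t))) := by
          gcongr
      _ = rexp (-t*c + ((n:ℝ) * (t + t^2/(1 - 2*t)) + t*lam/(1 - 2*t))) := by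
          rw [Real.exp_add, Real.exp_add]
      _ = rexp (-x) := by rw [hexp_eq]
  calc stdGaussianPi n {z | c ≤ ∑ i, (z i + a i) ^ 2}
      = ENNReal.ofReal ((stdGaussianPi n {z | c ≤ ∑ i, (z i + a i) ^ 2}).toReal) :=
        (ENNReal.ofReal_toReal (measure_ne_top _ _)).symm
    _ ≤ ENNReal.ofReal (Real.exp (-x)) :=
        ENNReal.ofReal_le_ofReal (le_trans hmarkov hkey)
end

section
/- For every positive integer n, every vector a ∈ ℝⁿ with λ := ∑_{i=1}^n a_i², and every real x ≥ 0, P(∑_{i=1}^n (z_i + a_i)² ≤ (n + λ) − 2√((n + 2λ) x)) ≤ exp(−x). -/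
open MeasureTheory ProbabilityTheory Real MeasureTheory.Measure
open scoped ENNReal NNReal

instance inst_s4 (n : ℕ) : IsProbabilityMeasure (stdGaussianPi n) := by
  unfold stdGaussianPi; infer_instance


lemma log_quad_lb {u : ℝ} (hu : 0 ≤ u) : u - u^2/2 ≤ Real.log (1+u) := by
  set g : ℝ → ℝ := fun v => Real.log (1+v) - (v - v^2/2) with hg
  have hderiv : ∀ v : ℝ, 0 < v → HasDerivAt g ((1+v)⁻¹ - (1 - v)) v := by
    intro v hv
    have h1 : HasDerivAt (fun w : ℝ => 1 + w) 1 v := (hasDerivAt_id v).const_add 1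
    have h2 : HasDerivAt (fun w : ℝ => Real.log (1+w)) ((1+v)⁻¹ * 1) v :=
      (Real.hasDerivAt_log (by linarith)).comp v h1
    have h3 : HasDerivAt (fun w : ℝ => w - w^2/2) (1 - 2*v^(2-1)/2) v :=
      (hasDerivAt_id v).sub (((hasDerivAt_pow 2 v)).div_const 2)
    exact (h2.sub h3).congr_deriv (by norm_num)
  have hcont : ContinuousOn g (Set.Ici 0) := by
    apply ContinuousOn.sub
    · exact (Real.continuousOn_log.comp (continuous_const.add continuous_id).continuousOn
        (fun v hv => by simp at hv ⊢; intro h; linarith))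
    · fun_prop
  have hmono : MonotoneOn g (Set.Ici 0) := by
    apply monotoneOn_of_deriv_nonneg (convex_Ici 0) hcont
    · intro v hv
      rw [interior_Ici] at hv
      exact (hderiv v hv).differentiableAt.differentiableWithinAt
    · intro v hv
      rw [interior_Ici] at hv
      rw [(hderiv v hv).deriv]
      rw [Set.mem_Ioi] at hv
      have h1 : (0:ℝ) < 1 + v := by linarith
      have h2 : (1-v)*(1+v) ≤ 1 := by nlinarith
      have h3 : (1:ℝ) = (1+v)⁻¹ * (1+v) := (inv_mul_cancel₀ h1.ne').symm
      nlinarith [inv_pos.mpr h1]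
  have h0 : g 0 = 0 := by simp [hg]
  have := hmono (Set.self_mem_Ici) (Set.mem_Ici.mpr hu) hu
  rw [h0] at this
  simp only [hg] at this
  linarith

lemma integral_stdGaussianPi_prod (n : ℕ) (f : Fin n → ℝ → ℝ) :
    ∫ z, ∏ i, f i (z i) ∂(stdGaussianPi n) = ∏ i, ∫ y, f i y ∂(gaussianReal 0 1) := by
  induction n with
  | zero => simp [stdGaussianPi]
  | succ n ih =>
      calc
        _ = ∫ p : ℝ × (Fin n → ℝ),
            f 0 p.1 * ∏ i : Fin n, f (Fin.succ i) (p.2 i) ∂((gaussianReal 0 1).prod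
              (Measure.pi fun _ => gaussianReal 0 1)) := by
          rw [stdGaussianPi, ← ((measurePreserving_piFinSuccAbove
            (fun _ : Fin (n+1) => gaussianReal 0 1) 0).symm).integral_comp']
          simp_rw [MeasurableEquiv.piFinSuccAbove_symm_apply, Fin.insertNthEquiv,
            Fin.prod_univ_succ, Fin.insertNth_zero, Equiv.coe_fn_mk, Fin.cons_succ,
            Fin.cons_zero, cast_eq]
        _ = (∫ y, f 0 y ∂(gaussianReal 0 1)) * ∏ i : Fin n,
              ∫ y, f (Fin.succ i) y ∂(gaussianReal 0 1) := by
          rw [← ih (fun i => f (Fin.succ i)), ← integral_prod_mul]; rfl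
        _ = _ := by rw [Fin.prod_univ_succ]

lemma gauss_exp_int (t c : ℝ) (ht : 0 ≤ t) :
    ∫ z, Real.exp (-(t * (z + c)^2)) ∂(gaussianReal 0 1)
      = (Real.sqrt (1+2*t))⁻¹ * Real.exp (-(t*c^2)/(1+2*t)) := by
  have h2t : (0:ℝ) < 1 + 2*t := by linarith
  set b : ℝ := t + 1/2 with hb
  have hbpos : 0 < b := by rw [hb]; linarith
  set d : ℝ := 2*t*c/(1+2*t) with hd
  set e : ℝ := -(t*c^2)/(1+2*t) with he
  rw [gaussianReal_of_var_ne_zero 0 one_ne_zero]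
  have hmeas : Measurable fun x => (gaussianPDFReal 0 1 x).toNNReal :=
    (measurable_gaussianPDFReal 0 1).real_toNNReal
  have hpdf : gaussianPDF 0 1 = fun x => ((gaussianPDFReal 0 1 x).toNNReal : ℝ≥0∞) := rfl
  rw [hpdf, integral_withDensity_eq_integral_smul hmeas]
  have hptwise : ∀ x : ℝ, (gaussianPDFReal 0 1 x).toNNReal • Real.exp (-(t * (x + c)^2))
      = ((Real.sqrt (2*π))⁻¹ * Real.exp e) * Real.exp (-b * (x + d)^2) := by
    intro x
    rw [NNReal.smul_def, Real.coe_toNNReal _ (gaussianPDFReal_nonneg 0 1 x),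
      gaussianPDFReal_def]
    simp only [NNReal.coe_one, mul_one, sub_zero]
    rw [smul_eq_mul, mul_assoc, mul_assoc, ← Real.exp_add, ← Real.exp_add]
    congr 1
    rw [he, hd, hb]
    congr 1
    field_simp
    ring
  rw [integral_congr_ae (Filter.Eventually.of_forall hptwise), integral_const_mul,
    integral_add_right_eq_self (fun x => Real.exp (-b * x^2)) d, integral_gaussian]
  have hsq : (Real.sqrt (2*π))⁻¹ * Real.sqrt (π / b) = (Real.sqrt (1+2*t))⁻¹ := by
    rw [inv_mul_eq_div, ← Real.sqrt_div (by positivity)]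
    congr 1
    rw [hb]; field_simp; ring_nf
    rw [Real.sqrt_inv, inv_mul_cancel₀ (Real.sqrt_pos.mpr (by linarith)).ne']
  calc (Real.sqrt (2*π))⁻¹ * Real.exp e * Real.sqrt (π / b)
      = ((Real.sqrt (2*π))⁻¹ * Real.sqrt (π / b)) * Real.exp e := by ring
    _ = _ := by rw [hsq]

lemma factor_bound (t c : ℝ) (ht : 0 ≤ t) :
    (Real.sqrt (1+2*t))⁻¹ * Real.exp (-(t*c^2)/(1+2*t))
      ≤ Real.exp (-(t*(1+c^2)) + t^2*(1+2*c^2)) := by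
  have h2t : (0:ℝ) < 1 + 2*t := by linarith
  have h1 : (Real.sqrt (1+2*t))⁻¹ ≤ Real.exp (-t + t^2) := by
    have hle : Real.exp (t - t^2) ≤ Real.sqrt (1+2*t) := by
      have hl := log_quad_lb (by linarith : (0:ℝ) ≤ 2*t)
      rw [show (1:ℝ)+2*t = Real.exp (Real.log (1+2*t)) from (Real.exp_log h2t).symm,
        ← Real.exp_half]
      apply Real.exp_le_exp.mpr
      nlinarith [hl]
    calc (Real.sqrt (1+2*t))⁻¹ ≤ (Real.exp (t - t^2))⁻¹ := by
          apply inv_anti₀ (Real.exp_pos _) hle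
      _ = Real.exp (-t + t^2) := by rw [← Real.exp_neg]; ring_nf
  have h2 : Real.exp (-(t*c^2)/(1+2*t)) ≤ Real.exp (-(t*c^2) + 2*t^2*c^2) := by
    apply Real.exp_le_exp.mpr
    rw [div_le_iff₀ h2t]
    nlinarith [sq_nonneg c, mul_nonneg (mul_nonneg (mul_nonneg ht ht) ht) (sq_nonneg c)]
  calc (Real.sqrt (1+2*t))⁻¹ * Real.exp (-(t*c^2)/(1+2*t))
      ≤ Real.exp (-t + t^2) * Real.exp (-(t*c^2) + 2*t^2*c^2) := by
        exact mul_le_mul h1 h2 (Real.exp_pos _).le (Real.exp_pos _).le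
    _ = _ := by rw [← Real.exp_add]; ring_nf

set_option maxHeartbeats 1000000 in
/-- Lower tail bound for the noncentral chi-squared distribution with `n` degrees of
freedom and noncentrality `λ = ∑ i, a i ^ 2` (Birgé):
`P(χ²_n(λ) ≤ (n + λ) - 2√((n + 2λ) x)) ≤ exp (-x)`. -/
theorem noncentral_chiSq_lower_tail (n : ℕ) (hn : 0 < n) (a : Fin n → ℝ)
    (lam : ℝ) (hlam : lam = ∑ i, a i ^ 2) (x : ℝ) (hx : 0 ≤ x) :
    stdGaussianPi n
        {z | ∑ i, (z i + a i) ^ 2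
              ≤ ((n : ℝ) + lam) - 2 * Real.sqrt (((n : ℝ) + 2 * lam) * x)}
      ≤ ENNReal.ofReal (Real.exp (-x)) := by
  have hlam0 : 0 ≤ lam := by
    rw [hlam]; exact Finset.sum_nonneg fun i _ => sq_nonneg _
  set s : ℝ := (n : ℝ) + 2 * lam with hs_def
  have hs : 0 < s := by
    have : (1:ℝ) ≤ (n:ℝ) := by exact_mod_cast hn
    rw [hs_def]; linarith
  set t : ℝ := Real.sqrt x / Real.sqrt s with ht_def
  have ht : 0 ≤ t := by positivity
  have hsqs : Real.sqrt s ≠ 0 := by positivity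
  have hts : t^2 * s = x := by
    rw [ht_def, div_pow, Real.sq_sqrt hx, Real.sq_sqrt hs.le, div_mul_cancel₀ _ hs.ne']
  have htsx : t * Real.sqrt (s * x) = x := by
    rw [ht_def, Real.sqrt_mul hs.le]
    field_simp
    rw [Real.sq_sqrt hx]
  set m : ℝ := ((n : ℝ) + lam) - 2 * Real.sqrt (s * x) with hm_def
  set μ := stdGaussianPi n with hμ
  set A : Set (Fin n → ℝ) := {z | ∑ i, (z i + a i) ^ 2 ≤ m} with hA
  set g : (Fin n → ℝ) → ℝ := fun z => Real.exp (-(t * ∑ i, (z i + a i)^2)) with hg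
  have hgprod : ∀ z, g z = ∏ i, Real.exp (-(t * (z i + a i)^2)) := by
    intro z
    simp only [hg]
    rw [← Real.exp_sum]
    congr 1
    rw [Finset.mul_sum, ← Finset.sum_neg_distrib]
  -- measurability and integrability of g
  have hScont : Continuous fun z : Fin n → ℝ => ∑ i, (z i + a i)^2 := by
    apply continuous_finset_sum
    intro i _
    exact ((continuous_apply i).add continuous_const).pow 2
  have hgcont : Continuous g := (continuous_const.mul hScont).neg.rexp
  have hInt : Integrable g μ := by
    apply Integrable.mono' (integrable_const (1:ℝ)) hgcont.aestronglyMeasurable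
    filter_upwards with z
    rw [Real.norm_eq_abs, Real.abs_exp]
    apply Real.exp_le_one_iff.mpr
    simp only [neg_nonpos]
    exact mul_nonneg ht (Finset.sum_nonneg fun i _ => sq_nonneg _)
  -- value of the integral
  have hE : ∫ z, g z ∂μ = ∏ i, ((Real.sqrt (1+2*t))⁻¹ * Real.exp (-(t*(a i)^2)/(1+2*t))) := by
    rw [integral_congr_ae (Filter.Eventually.of_forall hgprod), hμ,
      integral_stdGaussianPi_prod n (fun i y => Real.exp (-(t * (y + a i)^2)))]
    exact Finset.prod_congr rfl fun i _ => gauss_exp_int t (a i) ht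
  have hEbound : ∫ z, g z ∂μ ≤ Real.exp (-(t*((n:ℝ)+lam)) + t^2*s) := by
    rw [hE]
    calc ∏ i, ((Real.sqrt (1+2*t))⁻¹ * Real.exp (-(t*(a i)^2)/(1+2*t)))
        ≤ ∏ i, Real.exp (-(t*(1+(a i)^2)) + t^2*(1+2*(a i)^2)) := by
          apply Finset.prod_le_prod
          · intro i _; positivity
          · intro i _; exact factor_bound t (a i) ht
      _ = Real.exp (∑ i, (-(t*(1+(a i)^2)) + t^2*(1+2*(a i)^2))) := (Real.exp_sum _ _).symm
      _ = Real.exp (-(t*((n:ℝ)+lam)) + t^2*s) := by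
          congr 1
          have h1 : ∑ i, ((1:ℝ) + (a i)^2) = (n:ℝ) + lam := by
            rw [Finset.sum_add_distrib, ← hlam]; simp
          have h2 : ∑ i, ((1:ℝ) + 2*(a i)^2) = s := by
            rw [Finset.sum_add_distrib, ← Finset.mul_sum, ← hlam, hs_def]; simp
          rw [Finset.sum_add_distrib, Finset.sum_neg_distrib, ← Finset.mul_sum,
            ← Finset.mul_sum, h1, h2]
  have hInonneg : 0 ≤ ∫ z, g z ∂μ := by
    apply integral_nonneg; intro z; exact (Real.exp_pos _).le
  -- Markov / Chernoff step
  have hgm : ∀ z ∈ A, Real.exp (-(t*m)) ≤ g z := by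
    intro z hz
    apply Real.exp_le_exp.mpr
    rw [neg_le_neg_iff]
    exact mul_le_mul_of_nonneg_left hz ht
  have key : ENNReal.ofReal (Real.exp (-(t*m))) * μ A ≤ ENNReal.ofReal (∫ z, g z ∂μ) :=
    calc ENNReal.ofReal (Real.exp (-(t*m))) * μ A
        = ∫⁻ z in A, ENNReal.ofReal (Real.exp (-(t*m))) ∂μ := (setLIntegral_const _ _).symm
      _ ≤ ∫⁻ z in A, ENNReal.ofReal (g z) ∂μ :=
          setLIntegral_mono (hgcont.measurable.ennreal_ofReal)
            fun z hz => ENNReal.ofReal_le_ofReal (hgm z hz)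
      _ ≤ ∫⁻ z, ENNReal.ofReal (g z) ∂μ := setLIntegral_le_lintegral _ _
      _ = ENNReal.ofReal (∫ z, g z ∂μ) :=
          (ofReal_integral_eq_lintegral_ofReal hInt
            (Filter.Eventually.of_forall fun z => (Real.exp_pos _).le)).symm
  have hμA : μ A ≤ ENNReal.ofReal ((∫ z, g z ∂μ) / Real.exp (-(t*m))) := by
    rw [ENNReal.ofReal_div_of_pos (Real.exp_pos _)]
    rw [ENNReal.le_div_iff_mul_le
      (Or.inl ((ENNReal.ofReal_pos.mpr (Real.exp_pos _)).ne'))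
      (Or.inl ENNReal.ofReal_ne_top)]
    rw [mul_comm]
    exact key
  -- final numeric bound
  have hfinal : (∫ z, g z ∂μ) / Real.exp (-(t*m)) ≤ Real.exp (-x) := by
    rw [div_eq_mul_inv, ← Real.exp_neg, neg_neg]
    calc (∫ z, g z ∂μ) * Real.exp (t*m)
        ≤ Real.exp (-(t*((n:ℝ)+lam)) + t^2*s) * Real.exp (t*m) :=
          mul_le_mul_of_nonneg_right hEbound (Real.exp_pos _).le
      _ = Real.exp (-(t*((n:ℝ)+lam)) + t^2*s + t*m) := (Real.exp_add _ _).symm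
      _ = Real.exp (-x) := by
          congr 1
          rw [hm_def]
          have : t * (((n:ℝ) + lam) - 2 * Real.sqrt (s*x))
              = t*((n:ℝ)+lam) - 2*(t*Real.sqrt (s*x)) := by ring
          rw [this, htsx]
          linarith [hts]
  calc μ A ≤ _ := hμA
    _ ≤ ENNReal.ofReal (Real.exp (-x)) := ENNReal.ofReal_le_ofReal hfinal
end

section
/- Let n ≥ 1 and a ∈ ℝⁿ with λ := ∑_{i=1}^n a_i². Then the distribution of ∑_{i=1}^n (z_i + a_i)² equals the distribution of (z_1 + √λ)² + ∑_{i=2}^n z_i²; that is, the noncentral chi-squared distribution with n degrees of freedom and noncentrality λ is the law of the sum of an independent noncentral chi-squared variable with 1 degree of freedom and noncentrality λ and a central chi-squared variable with n−1 degrees of freedom. -/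
open MeasureTheory ProbabilityTheory
open Real
open scoped ENNReal

private theorem aux_lintegral_pi_prod :
    ∀ (n : ℕ) (μ : Fin n → Measure ℝ), (∀ i, SigmaFinite (μ i)) →
      ∀ (f : Fin n → ℝ → ℝ≥0∞), (∀ i, Measurable (f i)) →
      ∫⁻ x, ∏ i, f i (x i) ∂Measure.pi μ = ∏ i, ∫⁻ y, f i y ∂μ i := by
  intro n
  induction n with
  | zero =>
    intro μ _ f _
    simp [Measure.pi_of_empty]
  | succ n ih =>
    intro μ hσ f hf
    have : ∀ i, SigmaFinite (μ i) := hσ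
    have h := measurePreserving_piFinSuccAbove μ 0
    simp_rw [Fin.zero_succAbove] at h
    calc ∫⁻ x, ∏ i, f i (x i) ∂Measure.pi μ
        = ∫⁻ x, (fun y : ℝ × (Fin n → ℝ) => f 0 y.1 * ∏ j, f (Fin.succ j) (y.2 j))
            (MeasurableEquiv.piFinSuccAbove (fun _ => ℝ) 0 x) ∂Measure.pi μ := by
          refine lintegral_congr fun x => ?_
          simp [MeasurableEquiv.piFinSuccAbove_apply, Fin.prod_univ_succ, Fin.zero_succAbove, Fin.tail]
      _ = ∫⁻ y, f 0 y.1 * ∏ j, f (Fin.succ j) (y.2 j)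
            ∂((μ 0).prod (Measure.pi fun j => μ (Fin.succ j))) :=
          h.lintegral_comp (((hf 0).comp measurable_fst).mul
            (Finset.measurable_prod _ fun j _ =>
              (hf _).comp ((measurable_pi_apply j).comp measurable_snd)))
      _ = (∫⁻ y, f 0 y ∂μ 0) * ∏ j, ∫⁻ y, f (Fin.succ j) y ∂μ (Fin.succ j) := by
          have hg : AEMeasurable (fun x : Fin n → ℝ => ∏ j, f (Fin.succ j) (x j))
              (Measure.pi fun j => μ (Fin.succ j)) :=
            (Finset.measurable_prod _ fun j _ =>
              (hf _).comp (measurable_pi_apply j)).aemeasurable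
          rw [lintegral_prod_mul (hf 0).aemeasurable hg,
            ih (fun j => μ (Fin.succ j)) (fun j => hσ _) (fun j => f (Fin.succ j))
              (fun j => hf _)]
      _ = ∏ i, ∫⁻ y, f i y ∂μ i := (Fin.prod_univ_succ (fun i => ∫⁻ y, f i y ∂μ i)).symm

private theorem aux_stdGaussianPi_eq (n : ℕ) :
    stdGaussianPi n = (volume : Measure (Fin n → ℝ)).withDensity
      fun x => ∏ i, ENNReal.ofReal (gaussianPDFReal 0 1 (x i)) := by
  have h1 : (gaussianReal 0 1 : Measure ℝ) = volume.withDensity (gaussianPDF 0 1) :=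
    gaussianReal_of_var_ne_zero 0 one_ne_zero
  refine Measure.pi_eq fun s hs => ?_
  rw [withDensity_apply _ (MeasurableSet.univ_pi hs),
    ← lintegral_indicator (MeasurableSet.univ_pi hs) _]
  have hind : ∀ x : Fin n → ℝ,
      (Set.pi Set.univ s).indicator
        (fun x => ∏ i, ENNReal.ofReal (gaussianPDFReal 0 1 (x i))) x
      = ∏ i, (s i).indicator (fun y => ENNReal.ofReal (gaussianPDFReal 0 1 y)) (x i) := by
    intro x
    by_cases hx : x ∈ Set.pi Set.univ s
    · rw [Set.indicator_of_mem hx]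
      exact Finset.prod_congr rfl fun i _ =>
        (Set.indicator_of_mem (hx i (Set.mem_univ i))
          (fun y => ENNReal.ofReal (gaussianPDFReal 0 1 y))).symm
    · rw [Set.indicator_of_notMem hx]
      obtain ⟨i, hi⟩ : ∃ i, x i ∉ s i := by
        simpa [Set.mem_pi] using hx
      exact (Finset.prod_eq_zero (Finset.mem_univ i)
        (by rw [Set.indicator_of_notMem hi])).symm
  simp_rw [hind]
  rw [volume_pi, aux_lintegral_pi_prod n (fun _ => volume) (fun _ => inferInstance) _
    (fun i => ((measurable_gaussianPDFReal 0 1).ennreal_ofReal).indicator (hs i))]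
  refine Finset.prod_congr rfl fun i _ => ?_
  rw [lintegral_indicator (hs i) _, h1, withDensity_apply _ (hs i)]
  rfl

private theorem aux_prod_pdf (n : ℕ) (x : Fin n → ℝ) :
    ∏ i, ENNReal.ofReal (gaussianPDFReal 0 1 (x i))
      = ENNReal.ofReal ((Real.sqrt (2 * π))⁻¹ ^ n * rexp (-(∑ i, x i ^ 2) / 2)) := by
  rw [← ENNReal.ofReal_prod_of_nonneg (fun i _ => gaussianPDFReal_nonneg 0 1 (x i))]
  congr 1
  calc ∏ i, gaussianPDFReal 0 1 (x i)
      = ∏ i, ((Real.sqrt (2 * π))⁻¹ * rexp (-(x i ^ 2) / 2)) := by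
        refine Finset.prod_congr rfl fun i _ => ?_
        simp [gaussianPDFReal]
    _ = (Real.sqrt (2 * π))⁻¹ ^ n * rexp (∑ i, -(x i ^ 2) / 2) := by
        rw [Finset.prod_mul_distrib, Finset.prod_const, Real.exp_sum, Finset.card_univ,
          Fintype.card_fin]
    _ = (Real.sqrt (2 * π))⁻¹ ^ n * rexp (-(∑ i, x i ^ 2) / 2) := by
        congr 1
        rw [← Finset.sum_div, ← Finset.sum_neg_distrib]

private theorem aux_sum_sq {n : ℕ} (w : EuclideanSpace ℝ (Fin n)) :
    ∑ i, w i ^ 2 = ‖w‖ ^ 2 := by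
  rw [EuclideanSpace.norm_eq, Real.sq_sqrt (Finset.sum_nonneg fun i _ => sq_nonneg _)]
  simp [Real.norm_eq_abs, sq_abs]

private theorem aux_map_isometry (n : ℕ)
    (e : EuclideanSpace ℝ (Fin n) ≃ₗᵢ[ℝ] EuclideanSpace ℝ (Fin n)) :
    Measure.map
      (fun z : Fin n → ℝ => (MeasurableEquiv.toLp 2 (Fin n → ℝ)).symm
          (e ((MeasurableEquiv.toLp 2 (Fin n → ℝ)).symm.symm z)))
      (stdGaussianPi n) = stdGaussianPi n := by
  set φ := (MeasurableEquiv.toLp 2 (Fin n → ℝ)).symm with hφdef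
  set T : (Fin n → ℝ) → (Fin n → ℝ) := fun z => φ (e (φ.symm z)) with hTdef
  have hφ := EuclideanSpace.volume_preserving_symm_measurableEquiv_toLp (Fin n)
  have hT : MeasurePreserving T volume volume :=
    hφ.comp (e.measurePreserving.comp hφ.symm)
  have hsum : ∀ z : Fin n → ℝ, ∑ i, (T z i) ^ 2 = ∑ i, (z i) ^ 2 := by
    intro z
    calc ∑ i, (T z i) ^ 2 = ∑ i, (e (φ.symm z)) i ^ 2 := rfl
      _ = ‖e (φ.symm z)‖ ^ 2 := aux_sum_sq _
      _ = ‖φ.symm z‖ ^ 2 := by rw [e.norm_map]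
      _ = ∑ i, ((φ.symm z : EuclideanSpace ℝ (Fin n)) i) ^ 2 := (aux_sum_sq _).symm
      _ = ∑ i, (z i) ^ 2 := rfl
  have hD : Measurable fun x : Fin n → ℝ => ∏ i, ENNReal.ofReal (gaussianPDFReal 0 1 (x i)) :=
    Finset.measurable_prod _ fun i _ =>
      ((measurable_gaussianPDFReal 0 1).comp (measurable_pi_apply i)).ennreal_ofReal
  ext s hs
  rw [Measure.map_apply hT.measurable hs, aux_stdGaussianPi_eq,
    withDensity_apply _ (hT.measurable hs), withDensity_apply _ hs]
  calc ∫⁻ x in T ⁻¹' s, ∏ i, ENNReal.ofReal (gaussianPDFReal 0 1 (x i)) ∂volume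
      = ∫⁻ x in T ⁻¹' s, ∏ i, ENNReal.ofReal (gaussianPDFReal 0 1 (T x i)) ∂volume := by
        refine lintegral_congr fun x => ?_
        rw [aux_prod_pdf, aux_prod_pdf, hsum]
    _ = ∫⁻ y in s, ∏ i, ENNReal.ofReal (gaussianPDFReal 0 1 (y i)) ∂volume :=
        hT.setLIntegral_comp_preimage hs hD

/-- Decomposition of the noncentral chi-squared distribution: `χ²_n(λ)` is distributed as
`χ²_1(λ) + χ²_{n-1}(0)`, i.e. the law of `∑ i, (z i + a i)²` equals that of
`(z 0 + √λ)² + ∑_{i ≠ 0} (z i)²`. -/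
theorem noncentral_chiSq_decomposition (n : ℕ) (hn : 0 < n) (a : Fin n → ℝ)
    (lam : ℝ) (hlam : lam = ∑ i, a i ^ 2) :
    Measure.map (fun z => ∑ i, (z i + a i) ^ 2) (stdGaussianPi n)
      = Measure.map
          (fun z => (z ⟨0, hn⟩ + Real.sqrt lam) ^ 2
              + ∑ i ∈ Finset.univ.erase ⟨0, hn⟩, z i ^ 2)
          (stdGaussianPi n) := by
  classical
  set i0 : Fin n := ⟨0, hn⟩ with hi0
  have hlam0 : 0 ≤ lam := hlam ▸ Finset.sum_nonneg fun i _ => sq_nonneg _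
  set b : Fin n → ℝ := fun i => if i = i0 then Real.sqrt lam else 0 with hb
  set φ := (MeasurableEquiv.toLp 2 (Fin n → ℝ)).symm with hφdef
  set A : EuclideanSpace ℝ (Fin n) := φ.symm a with hA
  set B : EuclideanSpace ℝ (Fin n) := φ.symm b with hB
  have hsumb : ∑ i, b i ^ 2 = lam := by
    rw [hb]
    simp only
    rw [Finset.sum_congr rfl (fun i _ => by
      show (if i = i0 then Real.sqrt lam else 0) ^ 2 = if i = i0 then lam else 0
      split_ifs
      · exact Real.sq_sqrt hlam0
      · simp)]
    simp
  have hnormB : ‖B‖ = ‖A‖ := by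
    have h1 : ‖B‖ ^ 2 = lam := by rw [← aux_sum_sq]; exact hsumb
    have h2 : ‖A‖ ^ 2 = lam := by rw [← aux_sum_sq]; exact hlam.symm
    calc ‖B‖ = Real.sqrt (‖B‖ ^ 2) := (Real.sqrt_sq (norm_nonneg _)).symm
      _ = Real.sqrt (‖A‖ ^ 2) := by rw [h1, h2]
      _ = ‖A‖ := Real.sqrt_sq (norm_nonneg _)
  set e : EuclideanSpace ℝ (Fin n) ≃ₗᵢ[ℝ] EuclideanSpace ℝ (Fin n) :=
    Submodule.reflection (ℝ ∙ (B - A))ᗮ with he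
  have heB : e B = A := Submodule.reflection_sub hnormB
  have hmap := aux_map_isometry n e
  set T : (Fin n → ℝ) → (Fin n → ℝ) := fun z => φ (e (φ.symm z)) with hTdef
  have hφp := EuclideanSpace.volume_preserving_symm_measurableEquiv_toLp (Fin n)
  have hTmeas : Measurable T :=
    (hφp.comp (e.measurePreserving.comp hφp.symm)).measurable
  have hadd : ∀ (u v : EuclideanSpace ℝ (Fin n)), ∑ i, (u i + v i) ^ 2 = ‖u + v‖ ^ 2 := by
    intro u v
    rw [← aux_sum_sq]
    exact Finset.sum_congr rfl fun i _ => by rw [PiLp.add_apply]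
  have hfT : ∀ z : Fin n → ℝ, ∑ i, (T z i + a i) ^ 2 = ∑ i, (z i + b i) ^ 2 := by
    intro z
    calc ∑ i, (T z i + a i) ^ 2
        = ∑ i, ((e (φ.symm z)) i + A i) ^ 2 := rfl
      _ = ‖e (φ.symm z) + A‖ ^ 2 := hadd _ _
      _ = ‖e (φ.symm z) + e B‖ ^ 2 := by rw [heB]
      _ = ‖e (φ.symm z + B)‖ ^ 2 := by rw [map_add]
      _ = ‖(φ.symm z : EuclideanSpace ℝ (Fin n)) + B‖ ^ 2 := by rw [e.norm_map]
      _ = ∑ i, ((φ.symm z : EuclideanSpace ℝ (Fin n)) i + B i) ^ 2 := (hadd _ _).symm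
      _ = ∑ i, (z i + b i) ^ 2 := rfl
  have hg : (fun z : Fin n → ℝ =>
        (z i0 + Real.sqrt lam) ^ 2 + ∑ i ∈ Finset.univ.erase i0, z i ^ 2)
      = fun z => ∑ i, (z i + b i) ^ 2 := by
    funext z
    have h1 : (z i0 + Real.sqrt lam) ^ 2 = (z i0 + b i0) ^ 2 := by rw [hb]; simp
    have h2 : ∑ i ∈ Finset.univ.erase i0, z i ^ 2
        = ∑ i ∈ Finset.univ.erase i0, (z i + b i) ^ 2 :=
      Finset.sum_congr rfl fun i hi => by
        rw [hb]; simp [Finset.ne_of_mem_erase hi]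
    rw [h1, h2]
    exact Finset.add_sum_erase _ (fun i => (z i + b i) ^ 2) (Finset.mem_univ i0)
  have hf_meas : Measurable fun z : Fin n → ℝ => ∑ i, (z i + a i) ^ 2 := by
    exact Finset.measurable_sum _ fun i _ =>
      (by fun_prop)
  calc Measure.map (fun z => ∑ i, (z i + a i) ^ 2) (stdGaussianPi n)
      = Measure.map (fun z => ∑ i, (z i + a i) ^ 2)
          (Measure.map T (stdGaussianPi n)) := by rw [hmap]
    _ = Measure.map ((fun z => ∑ i, (z i + a i) ^ 2) ∘ T) (stdGaussianPi n) :=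
        Measure.map_map hf_meas hTmeas
    _ = Measure.map
          (fun z => (z i0 + Real.sqrt lam) ^ 2
              + ∑ i ∈ Finset.univ.erase i0, z i ^ 2) (stdGaussianPi n) := by
        rw [hg]
        congr 1
        funext z
        exact hfT z
end

section
/- Let n be a positive integer, let 0 ≤ μ ≤ 1 and ε > 0 be real numbers with μ + ε ≤ 1, and let S_n(μ) be a binomial random variable with n trials and success probability μ. Then P(S_n(μ) ≥ n(μ + ε)) ≤ exp(−n ε² / (2 · MaxVar[μ, μ + ε])), where MaxVar[a, b] := sup_{p ∈ [a, b]} p(1 − p). -/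
open MeasureTheory ProbabilityTheory

/-- `MaxVar[a, b]`: the maximal Bernoulli variance `p (1 - p)` over `p ∈ [a, b]`. -/
noncomputable def maxVar (a b : ℝ) : ℝ :=
  sSup ((fun p => p * (1 - p)) '' Set.Icc a b)

lemma kl_lower {μ q M : ℝ} (h0 : 0 < μ) (hμq : μ < q) (hq1 : q ≤ 1) (hM0 : 0 < M)
    (hMb : ∀ p ∈ Set.Icc μ q, p * (1 - p) ≤ M) :
    (q - μ)^2 / (2*M) ≤ q * Real.log (q/μ) + (1 - q) * Real.log ((1-q)/(1-μ)) := by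
  set F : ℝ → ℝ := fun p => -(q * Real.log p) - (1-q) * Real.log (1-p) - (q-p)^2/(2*M) with hF
  have hcont : ContinuousOn F (Set.Icc μ q) := by
    rcases eq_or_lt_of_le hq1 with h1 | h1
    · have : F = fun p => -Real.log p - (q-p)^2/(2*M) := by
        subst h1; funext p; simp only [hF]; ring
      rw [this]
      apply ContinuousOn.sub
      · exact (Real.continuousOn_log.mono (by
          intro p hp
          simp only [Set.mem_compl_iff, Set.mem_singleton_iff]
          exact ne_of_gt (lt_of_lt_of_le h0 hp.1))).neg
      · fun_prop
    · apply ContinuousOn.sub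
      apply ContinuousOn.sub
      · exact ((Real.continuousOn_log.comp continuousOn_id (by
          intro p hp
          simp only [Set.mem_compl_iff, Set.mem_singleton_iff, id]
          exact ne_of_gt (lt_of_lt_of_le h0 hp.1))).const_smul q).neg
      · exact (Real.continuousOn_log.comp (by fun_prop) (by
          intro p hp
          simp only [Set.mem_compl_iff, Set.mem_singleton_iff]
          have := hp.2; intro hc; nlinarith)).const_smul (1-q)
      · fun_prop
  have hderiv : ∀ x ∈ Set.Ioo μ q, HasDerivAt F
      (-(q * x⁻¹) - (1-q) * ((1-x)⁻¹ * (-1)) - (2*(q-x)^1*(-1))/(2*M)) x := by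
    intro x hx
    obtain ⟨hxl, hxr⟩ := hx
    have hx0 : 0 < x := lt_of_le_of_lt h0.le hxl
    have hx1 : x < 1 := lt_of_lt_of_le hxr hq1
    have d1 : HasDerivAt (fun p : ℝ => Real.log p) x⁻¹ x := Real.hasDerivAt_log hx0.ne'
    have dlin : HasDerivAt (fun p : ℝ => 1 - p) (-1) x := (hasDerivAt_id x).const_sub 1
    have d2 : HasDerivAt (fun p : ℝ => Real.log (1-p)) ((1-x)⁻¹ * (-1)) x :=
      (Real.hasDerivAt_log (by linarith : (1:ℝ) - x ≠ 0)).comp x dlin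
    have d3 : HasDerivAt (fun p : ℝ => (q-p)^2/(2*M)) ((2*(q-x)^1*(-1))/(2*M)) x := by
      have : HasDerivAt (fun p : ℝ => (q-p)^2) (2*(q-x)^1*(-1)) x := by
        have h := ((hasDerivAt_id x).const_sub q).pow 2
        simpa [Pi.pow_def] using h
      exact this.div_const (2*M)
    exact (((d1.const_mul q).neg).sub (d2.const_mul (1-q))).sub d3
  have hanti : AntitoneOn F (Set.Icc μ q) := by
    apply antitoneOn_of_deriv_nonpos (convex_Icc μ q) hcont
    · intro x hx
      rw [interior_Icc] at hx
      exact ((hderiv x hx).differentiableAt).differentiableWithinAt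
    · intro x hx
      rw [interior_Icc] at hx
      rw [(hderiv x hx).deriv]
      obtain ⟨hxl, hxr⟩ := hx
      have hx0 : 0 < x := lt_of_le_of_lt h0.le hxl
      have hx1 : x < 1 := lt_of_lt_of_le hxr hq1
      have hxM : x * (1-x) ≤ M := hMb x ⟨hxl.le, hxr.le⟩
      have hqx : 0 < q - x := by linarith
      have hx0' : x ≠ 0 := hx0.ne'
      have h1x : (1:ℝ) - x ≠ 0 := by linarith
      have key : (q-x)/M ≤ (q-x)/(x*(1-x)) := by
        apply div_le_div_of_nonneg_left hqx.le (mul_pos hx0 (by linarith)) hxM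
      have hrw : -(q * x⁻¹) - (1-q) * ((1-x)⁻¹ * (-1)) = -((q-x)/(x*(1-x))) := by
        field_simp
        ring
      have : (2*(q-x)^1*(-1))/(2*M) = -((q-x)/M) := by
        field_simp
      rw [this, hrw]
      linarith
  have hle : F q ≤ F μ := hanti (Set.mem_Icc.mpr ⟨le_refl μ, hμq.le⟩)
      (Set.mem_Icc.mpr ⟨hμq.le, le_refl q⟩) hμq.le
  have hq0 : 0 < q := h0.trans hμq
  have hkl : q * Real.log (q/μ) + (1 - q) * Real.log ((1-q)/(1-μ))
      = q*(Real.log q - Real.log μ) + (1-q)*(Real.log (1-q) - Real.log (1-μ)) := by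
    rcases eq_or_lt_of_le hq1 with h1 | h1
    · subst h1; simp [Real.log_div one_ne_zero h0.ne']
    · rw [Real.log_div hq0.ne' h0.ne', Real.log_div (by linarith) (by linarith)]
  rw [hkl]
  have hFμ : F μ = -(q * Real.log μ) - (1-q) * Real.log (1-μ) - (q-μ)^2/(2*M) := rfl
  have hFq : F q = -(q * Real.log q) - (1-q) * Real.log (1-q) - 0 := by
    simp [hF]
  rw [hFμ, hFq] at hle
  linarith

lemma chernoff_sum (n : ℕ) (μ q : ℝ) (h0 : 0 < μ) (hμq : μ < q) (hq1 : q < 1) :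
    ∑ i ∈ Finset.range (n+1),
        (if (n:ℝ)*q ≤ (i:ℝ) then μ^i * (1-μ)^(n-i) * (n.choose i : ℝ) else 0)
      ≤ Real.exp (-((n:ℝ) * (q * Real.log (q/μ) + (1-q) * Real.log ((1-q)/(1-μ))))) := by
  have h1μ : 0 < 1 - μ := by linarith
  have h1q : 0 < 1 - q := by linarith
  have hq0 : 0 < q := h0.trans hμq
  set r : ℝ := q*(1-μ)/(μ*(1-q)) with hrdef
  have hr0 : 0 < r := div_pos (mul_pos hq0 h1μ) (mul_pos h0 h1q)
  have hr1 : 1 ≤ r := by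
    rw [hrdef, le_div_iff₀ (mul_pos h0 h1q)]
    nlinarith
  have hlr : 0 ≤ Real.log r := Real.log_nonneg hr1
  have step1 : ∀ i ∈ Finset.range (n+1),
      (if (n:ℝ)*q ≤ (i:ℝ) then μ^i * (1-μ)^(n-i) * (n.choose i : ℝ) else 0)
        ≤ (μ*r)^i * (1-μ)^(n-i) * (n.choose i : ℝ) * r ^ (-((n:ℝ)*q)) := by
    intro i _
    have hterm : (0:ℝ) ≤ μ^i * (1-μ)^(n-i) * (n.choose i : ℝ) := by positivity
    split_ifs with hc
    · have hexp : (1:ℝ) ≤ r ^ ((i:ℝ) - (n:ℝ)*q) := by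
        rw [Real.rpow_def_of_pos hr0]
        have : (0:ℝ) ≤ Real.log r * ((i:ℝ) - (n:ℝ)*q) := by
          apply mul_nonneg hlr (by linarith)
        calc (1:ℝ) = Real.exp 0 := Real.exp_zero.symm
          _ ≤ _ := Real.exp_le_exp.mpr this
      calc μ^i * (1-μ)^(n-i) * (n.choose i : ℝ)
          ≤ (μ^i * (1-μ)^(n-i) * (n.choose i : ℝ)) * r ^ ((i:ℝ) - (n:ℝ)*q) :=
            le_mul_of_one_le_right hterm hexp
        _ = (μ*r)^i * (1-μ)^(n-i) * (n.choose i : ℝ) * r ^ (-((n:ℝ)*q)) := by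
            rw [show (i:ℝ) - (n:ℝ)*q = (i:ℝ) + -((n:ℝ)*q) from by ring,
              Real.rpow_add hr0, Real.rpow_natCast r i, mul_pow]
            ring
    · positivity
  calc ∑ i ∈ Finset.range (n+1),
        (if (n:ℝ)*q ≤ (i:ℝ) then μ^i * (1-μ)^(n-i) * (n.choose i : ℝ) else 0)
      ≤ ∑ i ∈ Finset.range (n+1),
          (μ*r)^i * (1-μ)^(n-i) * (n.choose i : ℝ) * r ^ (-((n:ℝ)*q)) :=
        Finset.sum_le_sum step1
    _ = (μ*r + (1-μ))^n * r ^ (-((n:ℝ)*q)) := by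
        rw [← Finset.sum_mul, ← add_pow]
    _ = ((1-μ)/(1-q))^n * r ^ (-((n:ℝ)*q)) := by
        congr 2
        rw [hrdef]
        field_simp
        ring
    _ = Real.exp (-((n:ℝ) * (q * Real.log (q/μ) + (1-q) * Real.log ((1-q)/(1-μ))))) := by
        have hpos : (0:ℝ) < (1-μ)/(1-q) := div_pos h1μ h1q
        rw [Real.rpow_def_of_pos hr0]
        rw [← Real.exp_log hpos, ← Real.exp_nat_mul, ← Real.exp_add]
        congr 1
        rw [Real.log_div h1μ.ne' h1q.ne', hrdef,
          Real.log_div (mul_pos hq0 h1μ).ne' (mul_pos h0 h1q).ne',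
          Real.log_mul hq0.ne' h1μ.ne', Real.log_mul h0.ne' h1q.ne',
          Real.log_div hq0.ne' h0.ne', Real.log_div h1q.ne' h1μ.ne']
        ring

lemma binom_measure_eq (n : ℕ) (μ : ℝ) (hμ0 : 0 ≤ μ) (hμ1 : μ ≤ 1) (c : ℝ) :
    (PMF.binomial (Real.toNNReal μ) (Real.toNNReal_le_one.mpr hμ1) n).toMeasure
        {i | c ≤ ((i : ℕ) : ℝ)}
      = ENNReal.ofReal (∑ i ∈ Finset.range (n+1),
          if c ≤ (i:ℝ) then μ^i * (1-μ)^(n-i) * (n.choose i : ℝ) else 0) := by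
  rw [PMF.toMeasure_apply_fintype]
  rw [ENNReal.ofReal_sum_of_nonneg (fun i _ => by
    split_ifs with h
    · exact mul_nonneg (mul_nonneg (pow_nonneg hμ0 _) (pow_nonneg (by linarith) _))
        (Nat.cast_nonneg _)
    · exact le_refl 0)]
  rw [← Fin.sum_univ_eq_sum_range
    (fun i => ENNReal.ofReal (if c ≤ (i:ℝ) then μ^i * (1-μ)^(n-i) * (n.choose i : ℝ) else 0))
    (n+1)]
  apply Finset.sum_congr rfl
  intro i _
  rw [Set.indicator_apply]
  simp only [Set.mem_setOf_eq]
  split_ifs with h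
  · rw [PMF.binomial_apply]
    rw [Fin.val_last]
    rw [ENNReal.ofReal_mul (mul_nonneg (pow_nonneg hμ0 _) (pow_nonneg (by linarith) _)),
      ENNReal.ofReal_mul (pow_nonneg hμ0 _), ENNReal.ofReal_pow hμ0,
      ENNReal.ofReal_pow (by linarith), ENNReal.ofReal_sub 1 hμ0, ENNReal.ofReal_one,
      ENNReal.ofReal_natCast]
    rfl
  · simp

/-- Relative-entropy Chernoff bound (upper tail) for the binomial distribution:
`P(S_n(μ) ≥ n (μ + ε)) ≤ exp (-n ε² / (2 MaxVar[μ, μ + ε]))`. -/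
theorem binomial_chernoff_upper (n : ℕ) (hn : 0 < n) (μ ε : ℝ)
    (hμ0 : 0 ≤ μ) (hμ1 : μ ≤ 1) (hε : 0 < ε) (hμε : μ + ε ≤ 1) :
    (PMF.binomial (Real.toNNReal μ) (Real.toNNReal_le_one.mpr hμ1) n).toMeasure
        {i | (n : ℝ) * (μ + ε) ≤ (i : ℕ)}
      ≤ ENNReal.ofReal
          (Real.exp (-((n : ℝ) * ε ^ 2 / (2 * maxVar μ (μ + ε))))) := by
  set M := maxVar μ (μ + ε) with hM
  have hbdd : BddAbove ((fun p => p * (1 - p)) '' Set.Icc μ (μ+ε)) := by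
    refine ⟨1/4, ?_⟩
    rintro y ⟨p, _, rfl⟩
    nlinarith [sq_nonneg (2*p - 1)]
  have hMb : ∀ p ∈ Set.Icc μ (μ+ε), p * (1 - p) ≤ M :=
    fun p hp => le_csSup hbdd ⟨p, hp, rfl⟩
  have hM0 : 0 < M := by
    have h1 : (0:ℝ) < (μ + ε/2) * (1 - (μ + ε/2)) :=
      mul_pos (by linarith) (by linarith)
    exact lt_of_lt_of_le h1 (hMb _ ⟨by linarith, by linarith⟩)
  rw [binom_measure_eq n μ hμ0 hμ1 ((n:ℝ)*(μ+ε))]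
  apply ENNReal.ofReal_le_ofReal
  rcases eq_or_lt_of_le hμ0 with hμz | hμpos
  · -- μ = 0 : every term of the sum vanishes
    have hz : ∀ i ∈ Finset.range (n+1),
        (if (n:ℝ)*(μ+ε) ≤ (i:ℝ) then μ^i * (1-μ)^(n-i) * (n.choose i : ℝ) else 0) = 0 := by
      intro i _
      split_ifs with h
      · have hi : i ≠ 0 := by
          rintro rfl
          have hpos : (0:ℝ) < (n:ℝ)*(μ+ε) :=
            mul_pos (Nat.cast_pos.mpr hn) (by linarith)
          simp only [Nat.cast_zero] at h
          linarith
        rw [← hμz, zero_pow hi]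
        ring
      · rfl
    rw [Finset.sum_congr rfl hz]
    simp only [Finset.sum_const_zero]
    positivity
  · rcases eq_or_lt_of_le hμε with heq | hlt
    · -- μ + ε = 1 : the sum is exactly μ^n
      have hsum : ∑ i ∈ Finset.range (n+1),
          (if (n:ℝ)*(μ+ε) ≤ (i:ℝ) then μ^i * (1-μ)^(n-i) * (n.choose i : ℝ) else 0)
          = μ^n := by
        rw [Finset.sum_eq_single_of_mem n (Finset.self_mem_range_succ n)]
        · rw [if_pos (by rw [heq]; simp)]
          simp
        · intro b hb hbn
          rw [if_neg]
          rw [heq, mul_one]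
          push_neg
          exact_mod_cast lt_of_le_of_ne (Nat.lt_succ_iff.mp (Finset.mem_range.mp hb)) hbn
      rw [hsum]
      have hkl := kl_lower hμpos (show μ < 1 by linarith) (le_refl 1) hM0
        (fun p hp => hMb p (by rw [heq]; exact hp))
      have hlog : (1:ℝ) * Real.log (1/μ) + (1 - 1) * Real.log ((1-1)/(1-μ)) = -Real.log μ := by
        rw [one_div, Real.log_inv]
        ring
      rw [hlog] at hkl
      have hε1 : ε = 1 - μ := by linarith
      have key : (n:ℝ) * Real.log μ ≤ -((n:ℝ) * ε^2 / (2*M)) := by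
        rw [hε1]
        have hn0 : (0:ℝ) ≤ (n:ℝ) := Nat.cast_nonneg n
        have := mul_le_mul_of_nonneg_left hkl hn0
        calc (n:ℝ) * Real.log μ = -((n:ℝ) * (-Real.log μ)) := by ring
          _ ≤ -((n:ℝ) * ((1-μ)^2/(2*M))) := by linarith
          _ = -((n:ℝ) * (1-μ)^2 / (2*M)) := by ring
      calc μ^n = Real.exp (Real.log μ) ^ n := by rw [Real.exp_log hμpos]
        _ = Real.exp ((n:ℝ) * Real.log μ) := by rw [← Real.exp_nat_mul]
        _ ≤ _ := Real.exp_le_exp.mpr key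
    · -- generic case: Chernoff + KL lower bound
      have hμq : μ < μ + ε := by linarith
      calc ∑ i ∈ Finset.range (n+1),
            (if (n:ℝ)*(μ+ε) ≤ (i:ℝ) then μ^i * (1-μ)^(n-i) * (n.choose i : ℝ) else 0)
          ≤ Real.exp (-((n:ℝ) * ((μ+ε) * Real.log ((μ+ε)/μ)
              + (1-(μ+ε)) * Real.log ((1-(μ+ε))/(1-μ))))) :=
            chernoff_sum n μ (μ+ε) hμpos hμq hlt
        _ ≤ Real.exp (-((n:ℝ) * ε^2 / (2*M))) := by
            apply Real.exp_le_exp.mpr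
            apply neg_le_neg
            have hkl := kl_lower hμpos hμq hμε hM0 hMb
            have hεq : (μ + ε - μ) = ε := by ring
            rw [hεq] at hkl
            have hn0 : (0:ℝ) ≤ (n:ℝ) := Nat.cast_nonneg n
            have := mul_le_mul_of_nonneg_left hkl hn0
            calc (n:ℝ) * ε^2 / (2*M) = (n:ℝ) * (ε^2/(2*M)) := by ring
              _ ≤ _ := this
end

section
/- Let n be a positive integer, let 0 ≤ μ ≤ 1 and ε > 0 be real numbers with μ − ε ≥ 0, and let S_n(μ) be a binomial random variable with n trials and success probability μ. Then P(S_n(μ) ≤ n(μ − ε)) ≤ exp(−n ε² / (2 · MaxVar[μ − ε, μ])), where MaxVar[a, b] := sup_{p ∈ [a, b]} p(1 − p). -/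
open MeasureTheory ProbabilityTheory
open scoped ENNReal

/-- Padé bound: `2(x-y)/(x+y) ≤ log x - log y` for `0 < y ≤ x`. -/
lemma pade_log {x y : ℝ} (hy : 0 < y) (hxy : y ≤ x) :
    2 * (x - y) / (x + y) ≤ Real.log x - Real.log y := by
  have hx : 0 < x := lt_of_lt_of_le hy hxy
  -- consider f r = log r - 2(r-1)/(r+1) on [1, x/y]; f' = (r-1)^2/(r(r+1)^2) ≥ 0
  set f : ℝ → ℝ := fun r => Real.log r - 2 * (r - 1) / (r + 1) with hf
  have key : ∀ r : ℝ, 1 ≤ r → 0 ≤ f r := by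
    intro r hr
    have hmono : MonotoneOn f (Set.Ici (1 : ℝ)) := by
      apply monotoneOn_of_deriv_nonneg (convex_Ici 1)
      · apply ContinuousOn.sub
        · exact Real.continuousOn_log.mono (by intro z hz; simp at hz ⊢; linarith)
        · fun_prop (disch := intro z hz; simp at hz; intro h; linarith)
      · intro z hz
        rw [interior_Ici] at hz
        simp only [Set.mem_Ioi] at hz
        have hz0 : (0:ℝ) < z := by linarith
        have hz1 : z + 1 ≠ 0 := by linarith
        have h1 : HasDerivAt f (1/z - 2 * 2 / (z+1)^2) z := by
          have hlog : HasDerivAt Real.log (1/z) z := by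
            simpa using Real.hasDerivAt_log (ne_of_gt hz0)
          have hq : HasDerivAt (fun r : ℝ => 2 * (r - 1) / (r + 1))
              ((2 * 1 * (z+1) - 2*(z-1) * 1) / (z+1)^2) z := by
            exact ((((hasDerivAt_id z).sub_const 1).const_mul 2).div
              ((hasDerivAt_id z).add_const 1) hz1).congr_deriv (by simp)
          have : (2 * 1 * (z+1) - 2*(z-1) * 1) / (z+1)^2 = 2*2/(z+1)^2 := by ring
          rw [this] at hq
          exact hlog.sub hq
        exact (h1.differentiableAt.differentiableWithinAt)
      · intro z hz
        rw [interior_Ici] at hz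
        simp only [Set.mem_Ioi] at hz
        have hz0 : (0:ℝ) < z := by linarith
        have hz1 : (z + 1) ≠ 0 := by positivity
        have h1 : HasDerivAt f (1/z - 2 * 2 / (z+1)^2) z := by
          have hlog : HasDerivAt Real.log (1/z) z := by
            simpa using Real.hasDerivAt_log (ne_of_gt hz0)
          have hq : HasDerivAt (fun r : ℝ => 2 * (r - 1) / (r + 1))
              ((2 * 1 * (z+1) - 2*(z-1) * 1) / (z+1)^2) z := by
            exact ((((hasDerivAt_id z).sub_const 1).const_mul 2).div
              ((hasDerivAt_id z).add_const 1) hz1).congr_deriv (by simp)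
          have : (2 * 1 * (z+1) - 2*(z-1) * 1) / (z+1)^2 = 2*2/(z+1)^2 := by ring
          rw [this] at hq
          exact hlog.sub hq
        rw [h1.deriv]
        rw [div_sub_div _ _ (ne_of_gt hz0) (pow_ne_zero 2 hz1), le_div_iff₀ (by positivity)]
        ring_nf
        nlinarith [sq_nonneg (z - 1)]
    have h0 : f 1 = 0 := by simp [hf]
    have := hmono (Set.mem_Ici.2 le_rfl) (Set.mem_Ici.2 hr) hr
    rw [h0] at this; exact this
  have hr1 : 1 ≤ x / y := (one_le_div hy).2 hxy
  have := key _ hr1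
  rw [hf] at this
  simp only [] at this
  have hlogdiv : Real.log (x / y) = Real.log x - Real.log y :=
    Real.log_div (ne_of_gt hx) (ne_of_gt hy)
  rw [hlogdiv] at this
  have hxy0 : 0 < x + y := by linarith
  have : 2 * (x/y - 1) / (x/y + 1) ≤ Real.log x - Real.log y := by linarith
  refine le_trans (le_of_eq ?_) this
  have h1 : 0 < x/y + 1 := by positivity
  rw [div_eq_div_iff (ne_of_gt hxy0) (ne_of_gt h1)]
  field_simp

lemma tilt_lower {μ ε V : ℝ} (hμ1 : μ ≤ 1) (hε : 0 < ε) (hμε : 0 ≤ μ - ε)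
    (hVpos : 0 < V) (hV : ∀ p ∈ Set.Icc (μ - ε) μ, p * (1 - p) ≤ V) :
    ∀ t ∈ Set.Icc (0:ℝ) (ε/V), (μ - ε) * (1 - μ) ≤ μ * (1 - (μ - ε)) * Real.exp (-t) := by
  intro t ht
  obtain ⟨ht0, ht1⟩ := ht
  set q := μ - ε with hq
  have hμ0 : 0 < μ := by linarith
  have hq1 : q < 1 := by linarith
  rcases eq_or_lt_of_le hμε with h0 | hqpos
  · rw [← h0]; nlinarith [Real.exp_pos (-t)]
  rcases eq_or_lt_of_le hμ1 with h1 | hμlt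
  · rw [← h1]
    nlinarith [mul_pos (mul_pos hμ0 (by linarith : (0:ℝ) < μ - q)) (Real.exp_pos (-t))]
  -- main case 0 < q, μ < 1
  have h1μ : 0 < 1 - μ := by linarith
  have h1q : 0 < 1 - q := by linarith
  -- midpoint
  set m := (μ + q) / 2 with hm
  have hmIcc : m ∈ Set.Icc q μ := ⟨by rw [hm]; linarith, by rw [hm]; linarith⟩
  have hmV : m * (1 - m) ≤ V := hV m hmIcc
  have hm0 : 0 < m := by rw [hm]; linarith
  have hm1 : 0 < 1 - m := by rw [hm]; linarith
  have hmm : 0 < m * (1 - m) := by positivity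
  -- t ≤ ε / (m (1-m)) ≤ log (μ(1-q)/(q(1-μ)))
  have key : ε / V ≤ Real.log (μ * (1 - q) / (q * (1 - μ))) := by
    have h2 : ε / V ≤ ε / (m * (1 - m)) :=
      div_le_div_of_nonneg_left hε.le hmm hmV
    have d1 : (μ + q) ≠ 0 := by positivity
    have d2 : ((1-q) + (1-μ)) ≠ 0 := by positivity
    have h3 : ε / (m * (1 - m)) = 2 * (μ - q) / (μ + q) + 2 * ((1-q) - (1-μ)) / ((1-q) + (1-μ)) := by
      have hm' : m * (1 - m) = (μ + q) * ((1-q) + (1-μ)) / 4 := by rw [hm]; ring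
      rw [hm', div_div_eq_mul_div, div_add_div _ _ d1 d2, div_eq_div_iff (by positivity) (by positivity)]
      rw [hq]
      ring
    have h4 : 2 * (μ - q) / (μ + q) ≤ Real.log μ - Real.log q := pade_log hqpos (by linarith)
    have h5 : 2 * ((1-q) - (1-μ)) / ((1-q) + (1-μ)) ≤ Real.log (1-q) - Real.log (1-μ) :=
      pade_log h1μ (by linarith)
    have h6 : Real.log (μ * (1 - q) / (q * (1 - μ)))
        = Real.log μ - Real.log q + (Real.log (1-q) - Real.log (1-μ)) := by
      rw [Real.log_div (by positivity) (by positivity), Real.log_mul (by positivity) (by positivity),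
        Real.log_mul (by positivity) (by positivity)]
      ring
    rw [h6]; linarith
  have ht2 : t ≤ Real.log (μ * (1 - q) / (q * (1 - μ))) := le_trans ht1 key
  have h7 : Real.exp t ≤ μ * (1 - q) / (q * (1 - μ)) := by
    have := Real.exp_le_exp.2 ht2
    rwa [Real.exp_log (by positivity)] at this
  have h8 : q * (1 - μ) * Real.exp t ≤ μ * (1 - q) := by
    have := (le_div_iff₀ (by positivity : (0:ℝ) < q * (1 - μ))).1 h7
    nlinarith [this]
  have hexp : 0 < Real.exp t := Real.exp_pos t
  have heq : q * (1 - μ) = (q * (1 - μ) * Real.exp t) * (Real.exp t)⁻¹ := by field_simp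
  rw [Real.exp_neg, heq]
  exact mul_le_mul_of_nonneg_right h8 (inv_nonneg.2 hexp.le)

lemma mgf_bound {μ ε V : ℝ} (hμ0 : 0 ≤ μ) (hμ1 : μ ≤ 1) (hε : 0 < ε) (hμε : 0 ≤ μ - ε)
    (hVpos : 0 < V) (hV : ∀ p ∈ Set.Icc (μ - ε) μ, p * (1 - p) ≤ V) :
    μ * Real.exp (-(ε/V)) + (1 - μ)
      ≤ Real.exp (-(μ*(ε/V)) + V*(ε/V)^2/2) := by
  set T := ε / V with hT
  have hT0 : 0 < T := by positivity
  -- positivity of the denominator D t = μ e^{-t} + (1-μ)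
  have hDpos : ∀ t : ℝ, 0 ≤ t → 0 < μ * Real.exp (-t) + (1 - μ) := by
    intro t ht
    have h1 : Real.exp (-t) ≤ 1 := Real.exp_le_one_iff.2 (by linarith)
    have h2 : 0 < Real.exp (-t) := Real.exp_pos _
    nlinarith
  -- derivative of D
  have hD : ∀ t : ℝ, HasDerivAt (fun t : ℝ => μ * Real.exp (-t) + (1 - μ))
      (-(μ * Real.exp (-t))) t := by
    intro t
    have h := ((Real.hasDerivAt_exp (-t)).comp t ((hasDerivAt_id t).neg))
    simpa [mul_comm, mul_assoc, mul_left_comm] using (h.const_mul μ).add_const (1 - μ)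
  -- f and its derivative g
  set f : ℝ → ℝ := fun t => -(μ*t) + V*t^2/2 - Real.log (μ * Real.exp (-t) + (1 - μ)) with hf
  set g : ℝ → ℝ := fun t => -μ + V*t + μ * Real.exp (-t) / (μ * Real.exp (-t) + (1 - μ)) with hg
  have hfd : ∀ t : ℝ, 0 ≤ t → HasDerivAt f (g t) t := by
    intro t ht
    have hlog : HasDerivAt (fun t : ℝ => Real.log (μ * Real.exp (-t) + (1 - μ)))
        (-(μ * Real.exp (-t)) / (μ * Real.exp (-t) + (1 - μ))) t :=
      (hD t).log (ne_of_gt (hDpos t ht))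
    have hpoly : HasDerivAt (fun t : ℝ => -(μ*t) + V*t^2/2) (-μ + V*t) t := by
      have h1 : HasDerivAt (fun t : ℝ => -(μ*t)) (-μ) t := by
        exact ((hasDerivAt_id t).const_mul μ).neg.congr_deriv (by simp)
      have h2 : HasDerivAt (fun t : ℝ => V*t^2/2) (V*t) t := by
        have h := ((hasDerivAt_pow 2 t).const_mul V).div_const 2
        refine h.congr_deriv ?_
        push_cast
        ring
      exact h1.add h2
    have := hpoly.sub hlog
    refine this.congr_deriv ?_
    rw [hg]
    simp only []
    rw [neg_div, sub_neg_eq_add]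
  have hgd : ∀ t : ℝ, 0 ≤ t → HasDerivAt g
      (V - μ * Real.exp (-t) * (1 - μ) / (μ * Real.exp (-t) + (1 - μ))^2) t := by
    intro t ht
    have hnum : HasDerivAt (fun t : ℝ => μ * Real.exp (-t)) (-(μ * Real.exp (-t))) t := by
      have h := ((Real.hasDerivAt_exp (-t)).comp t ((hasDerivAt_id t).neg))
      simpa [mul_comm, mul_assoc, mul_left_comm] using h.const_mul μ
    have hquot := hnum.div (hD t) (ne_of_gt (hDpos t ht))
    have hlin : HasDerivAt (fun t : ℝ => -μ + V*t) V t := by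
      simpa using ((hasDerivAt_id t).const_mul V).const_add (-μ)
    have := hlin.add hquot
    refine this.congr_deriv ?_
    have hD0 : (μ * Real.exp (-t) + (1 - μ)) ≠ 0 := ne_of_gt (hDpos t ht)
    field_simp
    ring
  -- g's derivative is nonneg on [0, T]
  have hg_nonneg : ∀ t ∈ Set.Icc (0:ℝ) T,
      0 ≤ V - μ * Real.exp (-t) * (1 - μ) / (μ * Real.exp (-t) + (1 - μ))^2 := by
    intro t ht
    obtain ⟨ht0, ht1⟩ := ht
    set E := Real.exp (-t) with hE
    have hE1 : E ≤ 1 := Real.exp_le_one_iff.2 (by linarith)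
    have hE0 : 0 < E := Real.exp_pos _
    set Dt := μ * E + (1 - μ) with hDt
    have hDt0 : 0 < Dt := hDpos t ht0
    set p := μ * E / Dt with hp
    have hpmem : p ∈ Set.Icc (μ - ε) μ := by
      constructor
      · rw [hp, le_div_iff₀ hDt0]
        have h := tilt_lower hμ1 hε hμε hVpos hV t ⟨ht0, ht1⟩
        rw [← hE] at h
        rw [hDt]
        nlinarith [h]
      · rw [hp, div_le_iff₀ hDt0, hDt]
        nlinarith [mul_nonneg (mul_nonneg hμ0 (by linarith : (0:ℝ) ≤ 1 - μ))
          (by linarith : (0:ℝ) ≤ 1 - E)]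
    have := hV p hpmem
    have hpp : p * (1 - p) = μ * E * (1 - μ) / Dt^2 := by
      rw [hp]
      field_simp
      ring
    rw [hpp] at this
    linarith
  -- g is monotone on [0, T], and g 0 = 0
  have hg0 : g 0 = 0 := by
    rw [hg]
    norm_num
  have hgmono : MonotoneOn g (Set.Icc 0 T) := by
    apply monotoneOn_of_deriv_nonneg (convex_Icc 0 T)
    · intro x hx
      exact ((hgd x hx.1).continuousAt).continuousWithinAt
    · intro x hx
      rw [interior_Icc] at hx
      exact ((hgd x hx.1.le).differentiableAt).differentiableWithinAt
    · intro x hx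
      rw [interior_Icc] at hx
      rw [(hgd x hx.1.le).deriv]
      exact hg_nonneg x ⟨hx.1.le, hx.2.le⟩
  have hg_nn : ∀ t ∈ Set.Icc (0:ℝ) T, 0 ≤ g t := by
    intro t ht
    have := hgmono (Set.left_mem_Icc.2 hT0.le) ht ht.1
    rw [hg0] at this; exact this
  -- f is monotone on [0, T], f 0 = 0
  have hf0 : f 0 = 0 := by
    rw [hf]
    norm_num
  have hfmono : MonotoneOn f (Set.Icc 0 T) := by
    apply monotoneOn_of_deriv_nonneg (convex_Icc 0 T)
    · intro x hx
      exact ((hfd x hx.1).continuousAt).continuousWithinAt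
    · intro x hx
      rw [interior_Icc] at hx
      exact ((hfd x hx.1.le).differentiableAt).differentiableWithinAt
    · intro x hx
      rw [interior_Icc] at hx
      rw [(hfd x hx.1.le).deriv]
      exact hg_nn x ⟨hx.1.le, hx.2.le⟩
  have hfT : 0 ≤ f T := by
    have := hfmono (Set.left_mem_Icc.2 hT0.le) (Set.right_mem_Icc.2 hT0.le) hT0.le
    rw [hf0] at this; exact this
  rw [hf] at hfT
  simp only [] at hfT
  have hlogle : Real.log (μ * Real.exp (-T) + (1 - μ)) ≤ -(μ*T) + V*T^2/2 := by linarith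
  calc μ * Real.exp (-T) + (1 - μ)
      = Real.exp (Real.log (μ * Real.exp (-T) + (1 - μ))) :=
        (Real.exp_log (hDpos T hT0.le)).symm
    _ ≤ Real.exp (-(μ*T) + V*T^2/2) := Real.exp_le_exp.2 hlogle

lemma core_sum (n : ℕ) {μ ε V : ℝ} (hμ0 : 0 ≤ μ) (hμ1 : μ ≤ 1) (hε : 0 < ε)
    (hμε : 0 ≤ μ - ε) (hVpos : 0 < V) (hV : ∀ p ∈ Set.Icc (μ - ε) μ, p * (1 - p) ≤ V) :
    ∑ i ∈ Finset.range (n+1),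
        (if ((i:ℝ) ≤ (n:ℝ) * (μ - ε)) then μ^i * (1-μ)^(n-i) * (n.choose i : ℝ) else 0)
      ≤ Real.exp (-((n:ℝ) * ε^2 / (2*V))) := by
  set T := ε / V with hT
  have hT0 : 0 < T := by positivity
  have h1μ : 0 ≤ 1 - μ := by linarith
  set Q := (n:ℝ) * (μ - ε) with hQ
  -- term-wise bound
  have hstep : ∀ i ∈ Finset.range (n+1),
      (if ((i:ℝ) ≤ Q) then μ^i * (1-μ)^(n-i) * (n.choose i : ℝ) else 0)
      ≤ Real.exp (T * (Q - i)) * (μ^i * (1-μ)^(n-i) * (n.choose i : ℝ)) := by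
    intro i _
    have hnn : 0 ≤ μ^i * (1-μ)^(n-i) * (n.choose i : ℝ) := by positivity
    by_cases h : ((i:ℝ) ≤ Q)
    · rw [if_pos h]
      have h1 : (1:ℝ) ≤ Real.exp (T * (Q - i)) := by
        apply Real.one_le_exp
        have : (0:ℝ) ≤ Q - i := by linarith
        positivity
      nlinarith [h1, hnn]
    · rw [if_neg h]
      positivity
  refine le_trans (Finset.sum_le_sum hstep) ?_
  -- rewrite each term and use the binomial theorem
  have hterm : ∀ i ∈ Finset.range (n+1),
      Real.exp (T * (Q - i)) * (μ^i * (1-μ)^(n-i) * (n.choose i : ℝ))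
      = Real.exp (T * Q) * ((μ * Real.exp (-T))^i * (1-μ)^(n-i) * (n.choose i : ℝ)) := by
    intro i _
    rw [mul_pow, ← Real.exp_nat_mul]
    rw [show T * (Q - (i:ℝ)) = T * Q + (i:ℝ) * (-T) by ring, Real.exp_add]
    ring
  rw [Finset.sum_congr rfl hterm, ← Finset.mul_sum]
  have hbinom : ∑ i ∈ Finset.range (n+1),
      ((μ * Real.exp (-T))^i * (1-μ)^(n-i) * (n.choose i : ℝ))
      = (μ * Real.exp (-T) + (1-μ))^n := by
    rw [add_pow]
  rw [hbinom]
  have hbase0 : (0:ℝ) ≤ μ * Real.exp (-T) + (1-μ) := by positivity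
  have hle := mgf_bound hμ0 hμ1 hε hμε hVpos hV
  rw [← hT] at hle
  have hpow : (μ * Real.exp (-T) + (1-μ))^n ≤ Real.exp (-(μ*T) + V*T^2/2)^n :=
    pow_le_pow_left₀ hbase0 hle n
  calc Real.exp (T * Q) * (μ * Real.exp (-T) + (1-μ))^n
      ≤ Real.exp (T * Q) * Real.exp (-(μ*T) + V*T^2/2)^n := by
        apply mul_le_mul_of_nonneg_left hpow (Real.exp_pos _).le
    _ = Real.exp (T * Q + n * (-(μ*T) + V*T^2/2)) := by
        rw [← Real.exp_nat_mul, ← Real.exp_add]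
    _ = Real.exp (-((n:ℝ) * ε^2 / (2*V))) := by
        congr 1
        rw [hQ, hT]
        field_simp
        ring

/-- Relative-entropy Chernoff bound (lower tail) for the binomial distribution:
`P(S_n(μ) ≤ n (μ - ε)) ≤ exp (-n ε² / (2 MaxVar[μ - ε, μ]))`. -/
theorem binomial_chernoff_lower (n : ℕ) (hn : 0 < n) (μ ε : ℝ)
    (hμ0 : 0 ≤ μ) (hμ1 : μ ≤ 1) (hε : 0 < ε) (hμε : 0 ≤ μ - ε) :
    (PMF.binomial (Real.toNNReal μ) (Real.toNNReal_le_one.mpr hμ1) n).toMeasure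
        {i | ((i : ℕ) : ℝ) ≤ (n : ℝ) * (μ - ε)}
      ≤ ENNReal.ofReal
          (Real.exp (-((n : ℝ) * ε ^ 2 / (2 * maxVar (μ - ε) μ)))) := by
  -- facts about V = maxVar
  set V := maxVar (μ - ε) μ with hVdef
  have hbdd : BddAbove ((fun p => p * (1 - p)) '' Set.Icc (μ - ε) μ) :=
    (isCompact_Icc.image (by continuity)).bddAbove
  have hV : ∀ p ∈ Set.Icc (μ - ε) μ, p * (1 - p) ≤ V := fun p hp =>
    le_csSup hbdd (Set.mem_image_of_mem _ hp)
  have hVpos : 0 < V := by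
    have hm : μ - ε/2 ∈ Set.Icc (μ - ε) μ := ⟨by linarith, by linarith⟩
    have h1 : (μ - ε/2) * (1 - (μ - ε/2)) ≤ V := hV _ hm
    nlinarith [h1]
  -- measure to sum
  have hmeas : MeasurableSet {i : Fin (n+1) | ((i : ℕ) : ℝ) ≤ (n : ℝ) * (μ - ε)} :=
    (Set.toFinite _).measurableSet
  rw [PMF.toMeasure_apply _ hmeas, tsum_fintype]
  have hterm : ∀ i : Fin (n+1),
      ({i : Fin (n+1) | ((i : ℕ) : ℝ) ≤ (n : ℝ) * (μ - ε)}).indicator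
        (PMF.binomial (Real.toNNReal μ) (Real.toNNReal_le_one.mpr hμ1) n) i
      = ENNReal.ofReal
          (if (((i:ℕ):ℝ) ≤ (n:ℝ) * (μ - ε)) then
            μ^(i:ℕ) * (1-μ)^(n-(i:ℕ)) * (n.choose (i:ℕ) : ℝ) else 0) := by
    intro i
    by_cases h : (((i:ℕ):ℝ) ≤ (n:ℝ) * (μ - ε))
    · rw [Set.indicator_apply]
      simp only [Set.mem_setOf_eq]
      rw [if_pos h, if_pos h, PMF.binomial_apply]
      rw [Fin.val_last]
      change ENNReal.ofReal μ ^ (i:ℕ) * (1 - ENNReal.ofReal μ) ^ (n - (i:ℕ)) * ((n.choose (i:ℕ) : ℕ) : ℝ≥0∞) = _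
      have h1 : (1 : ℝ≥0∞) - ENNReal.ofReal μ = ENNReal.ofReal (1 - μ) := by
        rw [ENNReal.ofReal_sub 1 hμ0, ENNReal.ofReal_one]
      rw [h1, ← ENNReal.ofReal_pow hμ0, ← ENNReal.ofReal_pow (by linarith),
        ← ENNReal.ofReal_natCast, ← ENNReal.ofReal_mul (by positivity),
        ← ENNReal.ofReal_mul (mul_nonneg (pow_nonneg hμ0 _)
          (pow_nonneg (by linarith : (0:ℝ) ≤ 1 - μ) _))]
    · rw [Set.indicator_apply]
      simp only [Set.mem_setOf_eq]
      rw [if_neg h, if_neg h, ENNReal.ofReal_zero]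
  calc ∑ i : Fin (n+1), ({i : Fin (n+1) | ((i : ℕ) : ℝ) ≤ (n : ℝ) * (μ - ε)}).indicator
        (PMF.binomial (Real.toNNReal μ) (Real.toNNReal_le_one.mpr hμ1) n) i
      = ENNReal.ofReal (∑ i : Fin (n+1),
          (if (((i:ℕ):ℝ) ≤ (n:ℝ) * (μ - ε)) then
            μ^(i:ℕ) * (1-μ)^(n-(i:ℕ)) * (n.choose (i:ℕ) : ℝ) else 0)) := by
        rw [Finset.sum_congr rfl (fun i _ => hterm i)]
        rw [ENNReal.ofReal_sum_of_nonneg]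
        intro i _
        by_cases h : (((i:ℕ):ℝ) ≤ (n:ℝ) * (μ - ε))
        · rw [if_pos h]
          exact mul_nonneg (mul_nonneg (pow_nonneg hμ0 _)
            (pow_nonneg (by linarith) _)) (Nat.cast_nonneg _)
        · rw [if_neg h]
    _ ≤ ENNReal.ofReal (Real.exp (-((n : ℝ) * ε ^ 2 / (2 * V)))) := by
        apply ENNReal.ofReal_le_ofReal
        rw [Fin.sum_univ_eq_sum_range (fun j =>
          (if ((j:ℝ) ≤ (n:ℝ) * (μ - ε)) then μ^j * (1-μ)^(n-j) * (n.choose j : ℝ) else 0))]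
        exact core_sum n hμ0 hμ1 hε hμε hVpos hV
end

section
/- Let Σ and Σ̂ be real n×n matrices with Σ invertible and ‖Σ − Σ̂‖_F ≤ (1/2) · ‖Σ⁻¹‖₂⁻¹ (so that Σ̂ is invertible), and let μ, μ̂, x ∈ ℝⁿ. Define l(x) := (x − μ̂)ᵀ Σ̂⁻¹ (x − μ̂) and l*(x) := (x − μ)ᵀ Σ⁻¹ (x − μ). Then |l(x) − l*(x)| ≤ 2 ‖Σ⁻¹‖₂² · ‖x − μ‖² · ‖Σ − Σ̂‖_F + 4 ‖Σ⁻¹‖₂ · ‖x − μ‖ · ‖μ − μ̂‖ + 2 ‖Σ⁻¹‖₂ · ‖μ − μ̂‖², where ‖v‖ denotes the Euclidean norm of a vector v. -/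
open MeasureTheory

/-- The spectral (L2 operator) norm of a real square matrix. -/
noncomputable def matSpectralNorm {n : ℕ} (M : Matrix (Fin n) (Fin n) ℝ) : ℝ :=
  ‖Matrix.toEuclideanCLM (𝕜 := ℝ) M‖

/-- The Frobenius norm of a real square matrix. -/
noncomputable def frobNorm {n : ℕ} (M : Matrix (Fin n) (Fin n) ℝ) : ℝ :=
  Real.sqrt (∑ i, ∑ j, M i j ^ 2)

/-- The Euclidean norm of a vector in `ℝⁿ`. -/
noncomputable def eNorm {n : ℕ} (v : Fin n → ℝ) : ℝ :=
  Real.sqrt (∑ i, v i ^ 2)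

/-- The bilinear form `uᵀ M v`. -/
def quadForm {n : ℕ} (u : Fin n → ℝ) (M : Matrix (Fin n) (Fin n) ℝ)
    (v : Fin n → ℝ) : ℝ :=
  ∑ i, ∑ j, u i * M i j * v j

lemma eNorm_eq' {n : ℕ} (v : Fin n → ℝ) :
    eNorm v = ‖(WithLp.equiv 2 (Fin n → ℝ)).symm v‖ := by
  simp [eNorm, EuclideanSpace.norm_eq, sq_abs]

lemma quadForm_eq' {n : ℕ} (u : Fin n → ℝ) (M : Matrix (Fin n) (Fin n) ℝ) (v : Fin n → ℝ) :
    quadForm u M v =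
      inner ℝ ((WithLp.equiv 2 (Fin n → ℝ)).symm u)
        (Matrix.toEuclideanCLM (𝕜 := ℝ) M ((WithLp.equiv 2 (Fin n → ℝ)).symm v)) := by
  rw [show (WithLp.equiv 2 (Fin n → ℝ)).symm v = WithLp.toLp 2 v from rfl, Matrix.toEuclideanCLM_toLp]
  simp [quadForm, PiLp.inner_apply, Matrix.toLin'_apply, Matrix.mulVec, dotProduct,
    Finset.mul_sum, mul_assoc]
  refine Finset.sum_congr rfl fun i _ => ?_
  rw [Finset.sum_mul]
  refine Finset.sum_congr rfl fun j _ => ?_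
  ring

lemma quad_bound' {n : ℕ} (u : Fin n → ℝ) (M : Matrix (Fin n) (Fin n) ℝ) (v : Fin n → ℝ) :
    |quadForm u M v| ≤ matSpectralNorm M * eNorm u * eNorm v := by
  rw [quadForm_eq', eNorm_eq', eNorm_eq']
  calc |inner ℝ ((WithLp.equiv 2 (Fin n → ℝ)).symm u)
        (Matrix.toEuclideanCLM (𝕜 := ℝ) M ((WithLp.equiv 2 (Fin n → ℝ)).symm v))|
      ≤ ‖(WithLp.equiv 2 (Fin n → ℝ)).symm u‖ *
          ‖Matrix.toEuclideanCLM (𝕜 := ℝ) M ((WithLp.equiv 2 (Fin n → ℝ)).symm v)‖ :=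
        abs_real_inner_le_norm _ _
    _ ≤ ‖(WithLp.equiv 2 (Fin n → ℝ)).symm u‖ *
          (‖Matrix.toEuclideanCLM (𝕜 := ℝ) M‖ * ‖(WithLp.equiv 2 (Fin n → ℝ)).symm v‖) := by
        gcongr
        exact ContinuousLinearMap.le_opNorm _ _
    _ = _ := by rw [matSpectralNorm]; ring

lemma spectral_le_frob' {n : ℕ} (M : Matrix (Fin n) (Fin n) ℝ) :
    matSpectralNorm M ≤ frobNorm M := by
  apply ContinuousLinearMap.opNorm_le_bound _ (Real.sqrt_nonneg _)
  intro x
  have hx : Matrix.toEuclideanCLM (𝕜 := ℝ) M x =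
      (WithLp.equiv 2 (Fin n → ℝ)).symm (M.toLin' (WithLp.equiv 2 (Fin n → ℝ) x)) := by
    rfl
  rw [hx]
  set y := WithLp.equiv 2 (Fin n → ℝ) x with hy
  have hnx : ‖x‖ = Real.sqrt (∑ j, y j ^ 2) := by
    rw [EuclideanSpace.norm_eq]; congr 1; refine Finset.sum_congr rfl fun j _ => ?_
    rw [Real.norm_eq_abs, sq_abs]; rfl
  rw [EuclideanSpace.norm_eq, hnx]
  rw [← Real.sqrt_mul (by positivity)]
  apply Real.sqrt_le_sqrt
  calc ∑ i, ‖(WithLp.equiv 2 (Fin n → ℝ)).symm (M.toLin' y) i‖ ^ 2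
      = ∑ i, (∑ j, M i j * y j) ^ 2 := by
        refine Finset.sum_congr rfl fun i _ => ?_
        rw [Real.norm_eq_abs, sq_abs]
        simp [Matrix.toLin'_apply, Matrix.mulVec, dotProduct]
    _ ≤ ∑ i, (∑ j, M i j ^ 2) * (∑ j, y j ^ 2) := by
        refine Finset.sum_le_sum fun i _ => ?_
        exact Finset.sum_mul_sq_le_sq_mul_sq _ _ _
    _ = (∑ i, ∑ j, M i j ^ 2) * (∑ j, y j ^ 2) := by rw [Finset.sum_mul]

lemma spectral_mul_le' {n : ℕ} (M N : Matrix (Fin n) (Fin n) ℝ) :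
    matSpectralNorm (M * N) ≤ matSpectralNorm M * matSpectralNorm N := by
  unfold matSpectralNorm
  rw [map_mul]
  exact norm_mul_le _ _

lemma spectral_add_le' {n : ℕ} (M N : Matrix (Fin n) (Fin n) ℝ) :
    matSpectralNorm (M + N) ≤ matSpectralNorm M + matSpectralNorm N := by
  unfold matSpectralNorm
  rw [map_add]
  exact norm_add_le _ _

lemma isUnit_of_spectral_lt' {n : ℕ} (T : Matrix (Fin n) (Fin n) ℝ)
    (hT : matSpectralNorm T < 1) : IsUnit (1 - T) := by
  have h1 : IsUnit ((1 : EuclideanSpace ℝ (Fin n) →L[ℝ] EuclideanSpace ℝ (Fin n)) -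
      Matrix.toEuclideanCLM (𝕜 := ℝ) T) := (Units.oneSub _ hT).isUnit
  have h2 : (1 : EuclideanSpace ℝ (Fin n) →L[ℝ] EuclideanSpace ℝ (Fin n)) -
      Matrix.toEuclideanCLM (𝕜 := ℝ) T = Matrix.toEuclideanCLM (𝕜 := ℝ) (1 - T) := by
    rw [map_sub, map_one]
  rw [h2] at h1
  have := h1.map ((Matrix.toEuclideanCLM (𝕜 := ℝ) (n := Fin n)).symm :
    (EuclideanSpace ℝ (Fin n) →L[ℝ] EuclideanSpace ℝ (Fin n)) ≃⋆ₐ[ℝ] _)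
  simpa using this

lemma quad_expand' {n : ℕ} (u d : Fin n → ℝ) (M : Matrix (Fin n) (Fin n) ℝ) :
    quadForm (u + d) M (u + d) =
      quadForm u M u + quadForm u M d + quadForm d M u + quadForm d M d := by
  unfold quadForm
  rw [← Finset.sum_add_distrib, ← Finset.sum_add_distrib, ← Finset.sum_add_distrib]
  refine Finset.sum_congr rfl fun i _ => ?_
  rw [← Finset.sum_add_distrib, ← Finset.sum_add_distrib, ← Finset.sum_add_distrib]
  refine Finset.sum_congr rfl fun j _ => ?_
  simp only [Pi.add_apply]; ring

lemma quad_msub' {n : ℕ} (u v : Fin n → ℝ) (M N : Matrix (Fin n) (Fin n) ℝ) :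
    quadForm u (M - N) v = quadForm u M v - quadForm u N v := by
  unfold quadForm
  rw [← Finset.sum_sub_distrib]
  refine Finset.sum_congr rfl fun i _ => ?_
  rw [← Finset.sum_sub_distrib]
  refine Finset.sum_congr rfl fun j _ => ?_
  simp only [Matrix.sub_apply]; ring

/-- Perturbation bound for squared Mahalanobis distances: with
`l(x) = (x - μ̂)ᵀ Σ̂⁻¹ (x - μ̂)` and `l*(x) = (x - μ)ᵀ Σ⁻¹ (x - μ)`,
`|l(x) - l*(x)| ≤ 2‖Σ⁻¹‖₂² ‖x - μ‖² ‖Σ - Σ̂‖_F + 4‖Σ⁻¹‖₂ ‖x - μ‖ ‖μ - μ̂‖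
  + 2‖Σ⁻¹‖₂ ‖μ - μ̂‖²`. -/
theorem mahalanobis_perturbation (n : ℕ) (S Shat : Matrix (Fin n) (Fin n) ℝ)
    (hS : IsUnit S)
    (h : frobNorm (S - Shat) ≤ (1 / 2) * (matSpectralNorm S⁻¹)⁻¹)
    (μ μhat x : Fin n → ℝ) :
    |quadForm (x - μhat) Shat⁻¹ (x - μhat) - quadForm (x - μ) S⁻¹ (x - μ)|
      ≤ 2 * matSpectralNorm S⁻¹ ^ 2 * eNorm (x - μ) ^ 2 * frobNorm (S - Shat)
        + 4 * matSpectralNorm S⁻¹ * eNorm (x - μ) * eNorm (μ - μhat)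
        + 2 * matSpectralNorm S⁻¹ * eNorm (μ - μhat) ^ 2 := by
  set A := S⁻¹ with hA
  set E := S - Shat with hE
  set s := matSpectralNorm A with hs
  have hs0 : 0 ≤ s := norm_nonneg _
  have hF0 : 0 ≤ frobNorm E := Real.sqrt_nonneg _
  have hsE : s * frobNorm E ≤ 1 / 2 := by
    calc s * frobNorm E ≤ s * ((1 / 2) * s⁻¹) := mul_le_mul_of_nonneg_left h hs0
      _ = (1 / 2) * (s * s⁻¹) := by ring
      _ ≤ 1 / 2 := by
          rcases eq_or_ne s 0 with h0 | h0
          · simp [h0]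
          · rw [mul_inv_cancel₀ h0]; norm_num
  have hSdet : IsUnit S.det := (Matrix.isUnit_iff_isUnit_det S).mp hS
  have hAE : matSpectralNorm (A * E) ≤ s * frobNorm E :=
    (spectral_mul_le' A E).trans (mul_le_mul_of_nonneg_left (spectral_le_frob' E) hs0)
  have hShat : IsUnit Shat := by
    have h1 : IsUnit (1 - A * E) :=
      isUnit_of_spectral_lt' _ (lt_of_le_of_lt (hAE.trans hsE) (by norm_num))
    have h2 : Shat = S * (1 - A * E) := by
      rw [Matrix.mul_sub, mul_one, ← Matrix.mul_assoc, Matrix.mul_nonsing_inv S hSdet,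
        one_mul, hE, sub_sub_cancel]
    rw [h2]; exact hS.mul h1
  have hShatdet : IsUnit Shat.det := (Matrix.isUnit_iff_isUnit_det _).mp hShat
  set B := Shat⁻¹ with hB
  set sB := matSpectralNorm B with hsB
  have hsB0 : 0 ≤ sB := norm_nonneg _
  have hid : B - A = A * E * B := by
    have h1 : A * E * B = A * S * B - A * Shat * B := by
      rw [hE, Matrix.mul_sub, Matrix.sub_mul]
    rw [h1, hA, Matrix.nonsing_inv_mul S hSdet, one_mul, Matrix.mul_assoc,
      Matrix.mul_nonsing_inv Shat hShatdet, Matrix.mul_one]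
  have hBA : matSpectralNorm (B - A) ≤ s * frobNorm E * sB := by
    rw [hid]
    exact (spectral_mul_le' _ _).trans (mul_le_mul_of_nonneg_right hAE hsB0)
  have hBle : sB ≤ 2 * s := by
    have h1 : sB ≤ s + matSpectralNorm (B - A) := by
      have h2 := spectral_add_le' A (B - A)
      rw [add_sub_cancel] at h2
      exact h2
    have h3 : s * frobNorm E * sB ≤ (1 / 2) * sB := mul_le_mul_of_nonneg_right hsE hsB0
    linarith
  have hBA2 : matSpectralNorm (B - A) ≤ 2 * s ^ 2 * frobNorm E := by
    have h3 : s * frobNorm E * sB ≤ s * frobNorm E * (2 * s) :=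
      mul_le_mul_of_nonneg_left hBle (mul_nonneg hs0 hF0)
    nlinarith
  set u := x - μ with hu
  set d := μ - μhat with hd
  have eu0 : 0 ≤ eNorm u := Real.sqrt_nonneg _
  have ed0 : 0 ≤ eNorm d := Real.sqrt_nonneg _
  have hxd : x - μhat = u + d := by
    funext i
    simp only [hu, hd, Pi.add_apply, Pi.sub_apply]
    ring
  have key : quadForm (x - μhat) B (x - μhat) - quadForm u A u =
      quadForm u (B - A) u + quadForm u B d + quadForm d B u + quadForm d B d := by
    rw [hxd, quad_expand', quad_msub']
    ring
  rw [key]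
  have b1 := quad_bound' u (B - A) u
  have b2 := quad_bound' u B d
  have b3 := quad_bound' d B u
  have b4 := quad_bound' d B d
  have B1 : |quadForm u (B - A) u| ≤ 2 * s ^ 2 * frobNorm E * eNorm u * eNorm u :=
    b1.trans (mul_le_mul_of_nonneg_right (mul_le_mul_of_nonneg_right hBA2 eu0) eu0)
  have B2 : |quadForm u B d| ≤ 2 * s * eNorm u * eNorm d :=
    b2.trans (mul_le_mul_of_nonneg_right (mul_le_mul_of_nonneg_right hBle eu0) ed0)
  have B3 : |quadForm d B u| ≤ 2 * s * eNorm d * eNorm u :=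
    b3.trans (mul_le_mul_of_nonneg_right (mul_le_mul_of_nonneg_right hBle ed0) eu0)
  have B4 : |quadForm d B d| ≤ 2 * s * eNorm d * eNorm d :=
    b4.trans (mul_le_mul_of_nonneg_right (mul_le_mul_of_nonneg_right hBle ed0) ed0)
  calc |quadForm u (B - A) u + quadForm u B d + quadForm d B u + quadForm d B d|
      ≤ |quadForm u (B - A) u| + |quadForm u B d| + |quadForm d B u| + |quadForm d B d| := by
        calc |quadForm u (B - A) u + quadForm u B d + quadForm d B u + quadForm d B d|
            ≤ |quadForm u (B - A) u + quadForm u B d + quadForm d B u| + |quadForm d B d| :=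
              abs_add_le _ _
          _ ≤ |quadForm u (B - A) u + quadForm u B d| + |quadForm d B u| + |quadForm d B d| := by
              have := abs_add_le (quadForm u (B - A) u + quadForm u B d) (quadForm d B u)
              linarith
          _ ≤ |quadForm u (B - A) u| + |quadForm u B d| + |quadForm d B u| + |quadForm d B d| := by
              have := abs_add_le (quadForm u (B - A) u) (quadForm u B d)
              linarith
    _ ≤ 2 * s ^ 2 * frobNorm E * eNorm u * eNorm u + 2 * s * eNorm u * eNorm d
        + 2 * s * eNorm d * eNorm u + 2 * s * eNorm d * eNorm d := by linarith
    _ = 2 * s ^ 2 * eNorm u ^ 2 * frobNorm E + 4 * s * eNorm u * eNorm d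
        + 2 * s * eNorm d ^ 2 := by ring
end
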